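/- arXiv:1410.3119 — 6 statements merged into one kernel-verified Lean document; each statement's English description precedes it below -/
import Mathlib

section
/- Hypergraph (inclusion–exclusion) representation: let α be a real number with α ≠ −1, let S ⊆ ℤ^d, let n ≥ 0 and let (ω_0, …, ω_n) be any finite sequence of points of ℤ^d. For a nonempty subset J ⊆ {0,…,n} define F_J = α·∏_{j∈J} 1[ω_j ∈ S] if |J| is odd, and F_J = −(α/(1+α))·∏_{j∈J} 1[ω_j ∈ S] if |J| is even. Then (1+α)^{1[S ∩ {ω_0,…,ω_n} ≠ ∅]} = ∏_{J ⊆ {0,…,n}, |J| ≥ 1} (1 + F_J). -/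
open scoped BigOperators Classical

noncomputable section

/-- A point of the lattice ℤ^d. -/
abbrev Pt (d : ℕ) := Fin d → ℤ

/-- The hyperedge weight `F_J`: for a nonempty `J ⊆ {0,…,n}`,
`F_J = α·∏_{j∈J} 1[ω_j ∈ S]` if `|J|` is odd and
`F_J = −(α/(1+α))·∏_{j∈J} 1[ω_j ∈ S]` if `|J|` is even. -/
def Fweight {d : ℕ} (α : ℝ) (S : Set (Pt d)) (ω : ℕ → Pt d) (J : Finset ℕ) : ℝ :=
  if Odd J.card then α * ∏ j ∈ J, (if ω j ∈ S then (1 : ℝ) else 0)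
  else -(α / (1 + α)) * ∏ j ∈ J, (if ω j ∈ S then (1 : ℝ) else 0)

/-- **Hypergraph (inclusion–exclusion) representation.**
For `α ≠ −1`, `S ⊆ ℤ^d` and a finite sequence `ω_0, …, ω_n` of points of `ℤ^d`,
`(1+α)^{1[S ∩ {ω_0,…,ω_n} ≠ ∅]} = ∏_{J ⊆ {0,…,n}, |J| ≥ 1} (1 + F_J)`. -/
theorem hypergraph_representation {d : ℕ} (n : ℕ) (α : ℝ) (hα : α ≠ -1)
    (S : Set (Pt d)) (ω : ℕ → Pt d) :
    (if ∃ j ≤ n, ω j ∈ S then 1 + α else 1)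
      = ∏ J ∈ (Finset.range (n + 1)).powerset.erase ∅, (1 + Fweight α S ω J) := by
  classical
  set β : ℝ := 1 + α with hβdef
  have hβ : β ≠ 0 := by
    intro h; apply hα; linarith [h]
  set T : Finset ℕ := (Finset.range (n + 1)).filter (fun j => ω j ∈ S) with hT
  have hTsub : T ⊆ Finset.range (n + 1) := Finset.filter_subset _ _
  -- rewrite each factor
  have hfac : ∀ J ∈ (Finset.range (n + 1)).powerset.erase ∅,
      (1 + Fweight α S ω J) = if J ⊆ T then β ^ ((-1 : ℤ) ^ (J.card + 1)) else 1 := by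
    intro J hJ
    simp only [Finset.mem_erase, Finset.mem_powerset] at hJ
    obtain ⟨hJne, hJsub⟩ := hJ
    have hprod : (∏ j ∈ J, (if ω j ∈ S then (1 : ℝ) else 0))
        = if J ⊆ T then 1 else 0 := by
      by_cases h : J ⊆ T
      · simp only [h, if_true]
        apply Finset.prod_eq_one
        intro j hj
        have : ω j ∈ S := (Finset.mem_filter.mp (h hj)).2
        simp [this]
      · simp only [h, if_false]
        obtain ⟨j, hjJ, hjT⟩ := Finset.not_subset.mp h
        have hjS : ω j ∉ S := by
          intro hs
          exact hjT (Finset.mem_filter.mpr ⟨hJsub hjJ, hs⟩)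
        exact Finset.prod_eq_zero hjJ (by simp [hjS])
    unfold Fweight
    rcases Nat.even_or_odd J.card with he | ho
    · have : ¬ Odd J.card := by simpa [Nat.not_odd_iff_even] using he
      rw [if_neg this, hprod]
      by_cases h : J ⊆ T
      · have : (-1 : ℤ) ^ (J.card + 1) = -1 := by
          rw [Odd.neg_one_pow]; exact Even.add_one he
        simp only [if_pos h, mul_one]
        rw [this, zpow_neg, zpow_one, hβdef]
        have h1 : (1:ℝ) + α ≠ 0 := by rw [hβdef] at hβ; exact hβ
        field_simp
        ring
      · simp [h]
    · rw [if_pos ho, hprod]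
      by_cases h : J ⊆ T
      · have : (-1 : ℤ) ^ (J.card + 1) = 1 := by
          rw [Even.neg_one_pow]; exact Odd.add_one ho
        simp only [if_pos h, mul_one]
        rw [this, zpow_one]
      · simp [h]
  rw [Finset.prod_congr rfl hfac, show (fun J => if J ⊆ T then β ^ ((-1:ℤ) ^ (J.card + 1)) else 1) = fun J => if J ⊆ T then β ^ ((-1:ℤ) ^ (J.card + 1)) else 1 from rfl, ← Finset.prod_filter]
  have hfil : ((Finset.range (n + 1)).powerset.erase ∅).filter (fun J => J ⊆ T)
      = T.powerset.erase ∅ := by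
    ext J
    simp only [Finset.mem_filter, Finset.mem_erase, Finset.mem_powerset]
    constructor
    · rintro ⟨⟨h1, _⟩, h3⟩; exact ⟨h1, h3⟩
    · rintro ⟨h1, h3⟩; exact ⟨⟨h1, h3.trans hTsub⟩, h3⟩
  rw [hfil]
  have hzp : ∀ (s : Finset (Finset ℕ)) (f : Finset ℕ → ℤ),
      ∏ J ∈ s, β ^ f J = β ^ (∑ J ∈ s, f J) := by
    intro s f
    induction s using Finset.cons_induction with
    | empty => simp
    | cons a s ha ih => rw [Finset.prod_cons, Finset.sum_cons, ih, zpow_add₀ hβ]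
  rw [hzp]
  have hsum : (∑ J ∈ T.powerset.erase ∅, (-1 : ℤ) ^ (J.card + 1))
      = if T = ∅ then 0 else 1 := by
    have h1 : (∑ J ∈ T.powerset, (-1 : ℤ) ^ J.card) = if T = ∅ then 1 else 0 :=
      Finset.sum_powerset_neg_one_pow_card
    have h2 : T.powerset = insert ∅ (T.powerset.erase ∅) := by
      rw [Finset.insert_erase (Finset.empty_mem_powerset T)]
    rw [h2, Finset.sum_insert (Finset.notMem_erase _ _)] at h1
    simp only [Finset.card_empty, pow_zero] at h1
    have : (∑ J ∈ T.powerset.erase ∅, (-1 : ℤ) ^ (J.card + 1))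
        = -(∑ J ∈ T.powerset.erase ∅, (-1 : ℤ) ^ J.card) := by
      rw [← Finset.sum_neg_distrib]
      apply Finset.sum_congr rfl
      intro J _; rw [pow_succ]; ring
    rw [this]
    by_cases hTe : T = ∅ <;> simp [hTe] at h1 ⊢ <;> linarith
  rw [hsum]
  have hiff : (∃ j ≤ n, ω j ∈ S) ↔ T ≠ ∅ := by
    rw [← Finset.nonempty_iff_ne_empty]
    constructor
    · rintro ⟨j, hj, hjS⟩
      exact ⟨j, Finset.mem_filter.mpr ⟨Finset.mem_range.mpr (Nat.lt_succ_of_le hj), hjS⟩⟩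
    · rintro ⟨j, hj⟩
      rw [hT, Finset.mem_filter, Finset.mem_range] at hj
      exact ⟨j, Nat.lt_succ_iff.mp hj.1, hj.2⟩
  by_cases hE : ∃ j ≤ n, ω j ∈ S
  · have : T ≠ ∅ := hiff.mp hE
    simp [hE, this]
  · have : T = ∅ := by
      by_contra h; exact hE (hiff.mpr h)
    simp [hE, this]
end
end

section
/- Remainder form of the hypergraph representation: let α be a real number with α ≠ −1 and 1+α ≠ 0, let S ⊆ ℤ^d, let 0 ≤ k ≤ n and let (ω_0, …, ω_n) be any finite sequence of points of ℤ^d. With F_J defined by F_J = α·∏_{j∈J} 1[ω_j ∈ S] if |J| is odd and F_J = −(α/(1+α))·∏_{j∈J} 1[ω_j ∈ S] if |J| is even, one has (1+α)^{1[{ω_0,…,ω_{k−1}} ∩ S = ∅]·1[{ω_k,…,ω_n} ∩ S ≠ ∅]} = ∏_{J ⊆ {0,…,n}, |J| ≥ 1, J ∩ {k,…,n} ≠ ∅} (1 + F_J). -/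
open scoped BigOperators Classical

noncomputable section

lemma my_prod_zpow {ι : Type*} {x : ℝ} (hx : x ≠ 0) (s : Finset ι) (f : ι → ℤ) :
    ∏ i ∈ s, x ^ f i = x ^ (∑ i ∈ s, f i) := by
  classical
  induction s using Finset.induction with
  | empty => simp
  | insert _ _ h ih => rw [Finset.prod_insert h, Finset.sum_insert h, ih, zpow_add₀ hx]

/-- **Remainder form of the hypergraph representation.**
For `α ≠ −1` (equivalently `1 + α ≠ 0`), `S ⊆ ℤ^d`, `0 ≤ k ≤ n` and a finite sequence
`ω_0, …, ω_n` of points of `ℤ^d`,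
`(1+α)^{1[{ω_0,…,ω_{k−1}} ∩ S = ∅]·1[{ω_k,…,ω_n} ∩ S ≠ ∅]}
  = ∏_{J ⊆ {0,…,n}, |J| ≥ 1, J ∩ {k,…,n} ≠ ∅} (1 + F_J)`. -/
theorem hypergraph_representation_remainder {d : ℕ} (n k : ℕ) (hk : k ≤ n)
    (α : ℝ) (hα : α ≠ -1) (hα' : 1 + α ≠ 0) (S : Set (Pt d)) (ω : ℕ → Pt d) :
    (if (∀ j < k, ω j ∉ S) ∧ (∃ j, k ≤ j ∧ j ≤ n ∧ ω j ∈ S) then 1 + α else 1)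
      = ∏ J ∈ ((Finset.range (n + 1)).powerset.erase ∅).filter
            (fun J => ∃ j ∈ J, k ≤ j), (1 + Fweight α S ω J) := by
  
  classical
  set T : Finset ℕ := (Finset.range (n+1)).filter (fun j => ω j ∈ S) with hT
  set A : Finset ℕ := T.filter (fun j => j < k) with hA
  -- Step 1: each factor is an if
  have hfac : ∀ J : Finset ℕ,
      1 + Fweight α S ω J
        = if (∀ j ∈ J, ω j ∈ S) then (if Odd J.card then 1 + α else (1+α)⁻¹) else 1 := by
    intro J
    have hprod : (∏ j ∈ J, (if ω j ∈ S then (1 : ℝ) else 0))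
        = if (∀ j ∈ J, ω j ∈ S) then 1 else 0 := by
      split_ifs with h
      · exact Finset.prod_eq_one (fun j hj => by simp [h j hj])
      · push_neg at h
        obtain ⟨j, hj, hjS⟩ := h
        exact Finset.prod_eq_zero hj (by simp [hjS])
    unfold Fweight
    rw [hprod]
    split_ifs with h1 h2 h2 <;> field_simp <;> ring
  rw [Finset.prod_congr rfl (fun J _ => hfac J)]
  rw [← Finset.prod_filter]
  -- Step 2: identify the filtered set
  have hset : (((Finset.range (n + 1)).powerset.erase ∅).filter
        (fun J => ∃ j ∈ J, k ≤ j)).filter (fun J => ∀ j ∈ J, ω j ∈ S)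
      = T.powerset.filter (fun J => ∃ j ∈ J, k ≤ j) := by
    ext J
    simp only [Finset.mem_filter, Finset.mem_erase, Finset.mem_powerset, hT]
    constructor
    · rintro ⟨⟨⟨hne, hsub⟩, hex⟩, hall⟩
      refine ⟨fun j hj => Finset.mem_filter.2 ⟨hsub hj, hall j hj⟩, hex⟩
    · rintro ⟨hsub, hex⟩
      obtain ⟨j, hj, _⟩ := hex
      refine ⟨⟨⟨?_, fun j hj => (Finset.mem_filter.1 (hsub hj)).1⟩, j, hj, ‹_›⟩,
        fun j hj => (Finset.mem_filter.1 (hsub hj)).2⟩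
      exact Finset.ne_empty_of_mem hj
  rw [hset]
  -- Step 3: product as zpow
  have hg : ∀ J : Finset ℕ, (if Odd J.card then 1 + α else (1+α)⁻¹)
      = (1+α) ^ ((if Odd J.card then 1 else -1 : ℤ)) := by
    intro J; split_ifs <;> simp
  rw [Finset.prod_congr rfl (fun J _ => hg J), my_prod_zpow hα']
  -- Step 4: compute the exponent
  have hε : ∀ J : Finset ℕ, (if Odd J.card then 1 else -1 : ℤ) = -(-1)^J.card := by
    intro J
    rcases Nat.even_or_odd J.card with h | h
    · simp [h, Nat.not_odd_iff_even.2 h, h.neg_one_pow]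
    · simp [h, h.neg_one_pow]
  rw [Finset.sum_congr rfl (fun J _ => hε J), Finset.sum_neg_distrib]
  have hsplit := Finset.sum_filter_add_sum_filter_not T.powerset
      (fun J => ∃ j ∈ J, k ≤ j) (fun J => (-1 : ℤ)^J.card)
  have hcompl : T.powerset.filter (fun J => ¬ ∃ j ∈ J, k ≤ j) = A.powerset := by
    ext J
    simp only [Finset.mem_filter, Finset.mem_powerset, not_exists, not_and, hA]
    constructor
    · rintro ⟨hsub, hlt⟩
      intro j hj
      exact Finset.mem_filter.2 ⟨hsub hj, lt_of_not_ge (hlt j hj)⟩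
    · intro hsub
      refine ⟨fun j hj => (Finset.mem_filter.1 (hsub hj)).1, fun j hj => not_le.2 ?_⟩
      exact (Finset.mem_filter.1 (hsub hj)).2
  rw [hcompl, Finset.sum_powerset_neg_one_pow_card, Finset.sum_powerset_neg_one_pow_card] at hsplit
  have hQ : ∑ J ∈ T.powerset.filter (fun J => ∃ j ∈ J, k ≤ j), (-1 : ℤ)^J.card
      = (if T = ∅ then 1 else 0) - (if A = ∅ then 1 else 0) := by omega
  rw [hQ]
  -- Step 5: case analysis
  by_cases hex : ∃ j, k ≤ j ∧ j ≤ n ∧ ω j ∈ S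
  · obtain ⟨j, hkj, hjn, hjS⟩ := hex
    have hTne : T ≠ ∅ := Finset.ne_empty_of_mem
      (Finset.mem_filter.2 ⟨Finset.mem_range.2 (Nat.lt_succ_of_le hjn), hjS⟩)
    by_cases hall : ∀ j < k, ω j ∉ S
    · have hAe : A = ∅ := by
        rw [Finset.eq_empty_iff_forall_notMem]
        intro x hx
        obtain ⟨hxT, hxk⟩ := Finset.mem_filter.1 hx
        exact hall x hxk (Finset.mem_filter.1 hxT).2
      have he : (-((if T = ∅ then 1 else 0) - (if A = ∅ then 1 else 0)) : ℤ) = 1 := by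
        simp [hTne, hAe]
      rw [if_pos ⟨hall, j, hkj, hjn, hjS⟩, he, zpow_one]
    · push_neg at hall
      obtain ⟨i, hik, hiS⟩ := hall
      have hAne : A ≠ ∅ := Finset.ne_empty_of_mem (Finset.mem_filter.2
        ⟨Finset.mem_filter.2 ⟨Finset.mem_range.2 (by omega), hiS⟩, hik⟩)
      have : ¬ ((∀ j < k, ω j ∉ S) ∧ (∃ j, k ≤ j ∧ j ≤ n ∧ ω j ∈ S)) := by
        rintro ⟨h1, _⟩; exact h1 i hik hiS
      have he : (-((if T = ∅ then 1 else 0) - (if A = ∅ then 1 else 0)) : ℤ) = 0 := by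
        simp [hTne, hAne]
      rw [if_neg this, he, zpow_zero]
  · have hAT : A = T := by
      rw [hA]
      apply Finset.filter_true_of_mem
      intro x hx
      obtain ⟨hxr, hxS⟩ := Finset.mem_filter.1 hx
      by_contra h
      exact hex ⟨x, not_lt.1 h, Nat.lt_succ_iff.1 (Finset.mem_range.1 hxr), hxS⟩
    have : ¬ ((∀ j < k, ω j ∉ S) ∧ (∃ j, k ≤ j ∧ j ≤ n ∧ ω j ∈ S)) := by
      rintro ⟨_, h2⟩; exact hex h2
    have he : (-((if T = ∅ then 1 else 0) - (if A = ∅ then 1 else 0)) : ℤ) = 0 := by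
      rw [hAT]; split_ifs <;> ring
    rw [if_neg this, he, zpow_zero]
end
end

section
/- Lace prescription for labelled graphs: let a < b be integers and let w be any real-valued function on labelled edges. Then Σ_{Γ a connected labelled graph on {a,…,b}} ∏_{e ∈ Γ} w(e) = Σ_{L a labelled lace on {a,…,b}} (∏_{e ∈ L} w(e)) · ∏_{e' compatible with L} (1 + w(e')). -/
open scoped BigOperators Classical

/-- A labelled edge on a discrete interval: a pair `(s,t)` of natural numbers together
with a label (`true` = spacelike, `false` = timelike). -/
abbrev LEdge : Type := (ℕ × ℕ) × Bool

/-- All labelled edges on the discrete interval `{a,…,b}` (with `s < t`). -/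
def allLEdges (a b : ℕ) : Finset LEdge :=
  (((Finset.Icc a b) ×ˢ (Finset.Icc a b)) ×ˢ (Finset.univ : Finset Bool)).filter
    (fun e => e.1.1 < e.1.2)

/-- Lace connectedness of a labelled graph on `{a,…,b}`: (i) `b > a+1`; (ii) every
`a < j < b` is strictly covered by some edge; (iii) there are edges with left endpoint
`a` and right endpoint `b`. -/
def LConnected (a b : ℕ) (Γ : Finset LEdge) : Prop :=
  a + 1 < b ∧ (∀ j, a < j → j < b → ∃ e ∈ Γ, e.1.1 < j ∧ j < e.1.2) ∧
    (∃ e ∈ Γ, e.1.1 = a) ∧ (∃ e ∈ Γ, e.1.2 = b)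

/-- The labelled edge selected for the pair `(s,t)`: if the pair occurs in `Γ` with the
label spacelike then the spacelike edge is chosen, otherwise the timelike one. -/
def pickEdge (Γ : Finset LEdge) (s t : ℕ) : LEdge :=
  if ((s, t), true) ∈ Γ then ((s, t), true) else ((s, t), false)

/-- `t_{i+1} = max { t : ∃ s < t_i, (s,t) ∈ Γ }`. -/
def nextT (Γ : Finset LEdge) (t : ℕ) : ℕ :=
  (Γ.filter (fun e => e.1.1 < t)).sup (fun e => e.1.2)

/-- `s_{i+1} = min { s : (s, t_{i+1}) ∈ Γ }`. -/
def minS (Γ : Finset LEdge) (t : ℕ) : ℕ :=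
  (((Γ.filter (fun e => e.1.2 = t)).image (fun e => e.1.1)).min).untopD 0

/-- The inductive part of the lace selection algorithm, run with fuel. -/
def laceAux (Γ : Finset LEdge) (b : ℕ) : ℕ → ℕ → Finset LEdge
  | 0, _ => ∅
  | fuel + 1, t =>
    if b ≤ t then ∅
    else insert (pickEdge Γ (minS Γ (nextT Γ t)) (nextT Γ t)) (laceAux Γ b fuel (nextT Γ t))

/-- The lace `L_Γ` associated to a (connected) labelled graph `Γ` on `{a,…,b}`:
`s₁ = a`, `t₁ = max{t : (a,t) ∈ Γ}`, then inductively
`t_{i+1} = max{t : ∃ s < t_i, (s,t) ∈ Γ}` and `s_{i+1} = min{s : (s,t_{i+1}) ∈ Γ}`,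
terminating when `t_i = b`; ties in the label are resolved in favour of spacelike. -/
def laceOf (a b : ℕ) (Γ : Finset LEdge) : Finset LEdge :=
  insert (pickEdge Γ a ((Γ.filter (fun e => e.1.1 = a)).sup (fun e => e.1.2)))
    (laceAux Γ b (b - a) ((Γ.filter (fun e => e.1.1 = a)).sup (fun e => e.1.2)))

/-- A labelled lace on `{a,…,b}`: a connected labelled graph fixed by the lace map. -/
def IsLace (a b : ℕ) (L : Finset LEdge) : Prop := LConnected a b L ∧ laceOf a b L = L

/-- The set of (new) labelled edges on `{a,…,b}` compatible with the lace `L`: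
those whose addition does not alter the outcome of the lace algorithm. -/
def compatEdges (a b : ℕ) (L : Finset LEdge) : Finset LEdge :=
  (allLEdges a b).filter (fun e => e ∉ L ∧ laceOf a b (insert e L) = L)

namespace LacePf

/-- `t₁`, the first maximum in the algorithm. -/
def T1 (a : ℕ) (Γ : Finset LEdge) : ℕ :=
  (Γ.filter (fun e => e.1.1 = a)).sup (fun e => e.1.2)

/-- `WithTop`-valued version of `minS`. -/
def minS' (Γ : Finset LEdge) (t : ℕ) : WithTop ℕ :=
  ((Γ.filter (fun e => e.1.2 = t)).image (fun e => e.1.1)).min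

lemma minS_eq_untop (Γ : Finset LEdge) (t : ℕ) : minS Γ t = (minS' Γ t).untopD 0 := rfl

lemma minS_congr {Γ Δ : Finset LEdge} {t : ℕ} (h : minS' Δ t = minS' Γ t) :
    minS Δ t = minS Γ t := by rw [minS_eq_untop, minS_eq_untop, h]

lemma laceOf_def (a b : ℕ) (Γ : Finset LEdge) :
    laceOf a b Γ = insert (pickEdge Γ a (T1 a Γ)) (laceAux Γ b (b - a) (T1 a Γ)) := rfl

lemma pickEdge_fst (Γ : Finset LEdge) (s t : ℕ) : (pickEdge Γ s t).1 = (s, t) := by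
  unfold pickEdge; split <;> rfl

lemma pickEdge_fst1 (Γ : Finset LEdge) (s t : ℕ) : (pickEdge Γ s t).1.1 = s := by
  rw [pickEdge_fst]

lemma pickEdge_fst2 (Γ : Finset LEdge) (s t : ℕ) : (pickEdge Γ s t).1.2 = t := by
  rw [pickEdge_fst]

lemma pickEdge_mem {Γ : Finset LEdge} {s t : ℕ} {τ : Bool} (h : ((s, t), τ) ∈ Γ) :
    pickEdge Γ s t ∈ Γ := by
  unfold pickEdge
  split
  · assumption
  · cases τ with
    | true => exact absurd h (by assumption)
    | false => exact h

lemma pickEdge_congr {Γ Δ : Finset LEdge} {s t : ℕ}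
    (h : (((s, t), true) ∈ Δ) ↔ (((s, t), true) ∈ Γ)) : pickEdge Δ s t = pickEdge Γ s t := by
  unfold pickEdge; rw [if_congr h rfl rfl]

lemma mem_all {a b : ℕ} {e : LEdge} (h : e ∈ allLEdges a b) :
    a ≤ e.1.1 ∧ e.1.2 ≤ b ∧ e.1.1 < e.1.2 := by
  simp only [allLEdges, Finset.mem_filter, Finset.mem_product, Finset.mem_Icc,
    Finset.mem_univ, and_true] at h
  omega

/-- General facts about `minS` at a value `t'` attained by some edge. -/
lemma minS_spec {Γ : Finset LEdge} {t' : ℕ} {e0 : LEdge} (he0 : e0 ∈ Γ) (h0 : e0.1.2 = t') :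
    (∃ e ∈ Γ, e.1 = (minS Γ t', t')) ∧
      minS' Γ t' = (minS Γ t' : WithTop ℕ) ∧
      ∀ e ∈ Γ, e.1.2 = t' → minS Γ t' ≤ e.1.1 := by
  classical
  set img := (Γ.filter (fun e => e.1.2 = t')).image (fun e => e.1.1) with himg
  have hmem0 : e0.1.1 ∈ img := Finset.mem_image.2 ⟨e0, Finset.mem_filter.2 ⟨he0, h0⟩, rfl⟩
  obtain ⟨m, hm⟩ := Finset.min_of_mem hmem0
  have hmeq : minS Γ t' = m := by rw [minS_eq_untop]; show img.min.untopD 0 = m; rw [hm]; rfl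
  have hm' : minS' Γ t' = (minS Γ t' : WithTop ℕ) := by rw [hmeq]; exact hm
  have hmmem : m ∈ img := Finset.mem_of_min hm
  obtain ⟨e, hef, hee⟩ := Finset.mem_image.1 hmmem
  obtain ⟨heΓ, het⟩ := Finset.mem_filter.1 hef
  refine ⟨⟨e, heΓ, ?_⟩, hm', ?_⟩
  · rw [hmeq]; exact Prod.ext (by simpa using hee) het
  · intro e' he' het'
    have : e'.1.1 ∈ img := Finset.mem_image.2 ⟨e', Finset.mem_filter.2 ⟨he', het'⟩, rfl⟩
    rw [hmeq]
    exact_mod_cast Finset.min_le_of_eq this hm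

section Connected

variable {a b : ℕ} {Γ : Finset LEdge}

lemma T1_spec (hall : Γ ⊆ allLEdges a b) (hc : LConnected a b Γ) :
    (∃ e ∈ Γ, e.1 = (a, T1 a Γ)) ∧ a < T1 a Γ ∧ T1 a Γ ≤ b := by
  classical
  obtain ⟨e0, he0, ha0⟩ := hc.2.2.1
  have hne : (Γ.filter (fun e => e.1.1 = a)).Nonempty :=
    ⟨e0, Finset.mem_filter.2 ⟨he0, ha0⟩⟩
  obtain ⟨e, he, hsup⟩ := Finset.exists_mem_eq_sup _ hne (fun e => e.1.2)
  obtain ⟨heΓ, hea⟩ := Finset.mem_filter.1 he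
  have hbd := mem_all (hall heΓ)
  have hT : T1 a Γ = e.1.2 := hsup
  refine ⟨⟨e, heΓ, Prod.ext (by simp [hea]) hsup.symm⟩, by omega, by omega⟩

lemma nextT_le (hall : Γ ⊆ allLEdges a b) (t : ℕ) : nextT Γ t ≤ b := by
  refine Finset.sup_le fun e he => ?_
  exact (mem_all (hall (Finset.mem_filter.1 he).1)).2.1

lemma nextT_spec (hall : Γ ⊆ allLEdges a b) (hc : LConnected a b Γ) {t : ℕ}
    (hat : a < t) (htb : t < b) :
    (∃ e ∈ Γ, e.1.1 < t ∧ e.1.2 = nextT Γ t) ∧ t < nextT Γ t := by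
  classical
  obtain ⟨e0, he0, h1, h2⟩ := hc.2.1 t hat htb
  have hne : (Γ.filter (fun e => e.1.1 < t)).Nonempty :=
    ⟨e0, Finset.mem_filter.2 ⟨he0, h1⟩⟩
  obtain ⟨e, he, hsup⟩ := Finset.exists_mem_eq_sup _ hne (fun e => e.1.2)
  obtain ⟨heΓ, hea⟩ := Finset.mem_filter.1 he
  have hle : e0.1.2 ≤ nextT Γ t :=
    Finset.le_sup (f := fun e => e.1.2) (Finset.mem_filter.2 ⟨he0, h1⟩)
  exact ⟨⟨e, heΓ, hea, hsup.symm⟩, lt_of_lt_of_le h2 hle⟩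

/-- All the step facts the algorithm needs at a point `a < t < b`. -/
lemma step_facts (hall : Γ ⊆ allLEdges a b) (hc : LConnected a b Γ) {t : ℕ}
    (hat : a < t) (htb : t < b) :
    t < nextT Γ t ∧ nextT Γ t ≤ b ∧ minS Γ (nextT Γ t) < t ∧
      minS' Γ (nextT Γ t) = (minS Γ (nextT Γ t) : WithTop ℕ) ∧
      (∀ e ∈ Γ, e.1.2 = nextT Γ t → minS Γ (nextT Γ t) ≤ e.1.1) ∧
      (∃ e ∈ Γ, e.1 = (minS Γ (nextT Γ t), nextT Γ t)) ∧
      pickEdge Γ (minS Γ (nextT Γ t)) (nextT Γ t) ∈ Γ := by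
  obtain ⟨⟨e1, he1, he1s, he1t⟩, htt'⟩ := nextT_spec hall hc hat htb
  obtain ⟨⟨e2, he2, he2p⟩, hm', hmin⟩ := minS_spec he1 he1t
  have hst : minS Γ (nextT Γ t) < t := lt_of_le_of_lt (hmin e1 he1 he1t) he1s
  have hpm : pickEdge Γ (minS Γ (nextT Γ t)) (nextT Γ t) ∈ Γ := by
    have : ((minS Γ (nextT Γ t), nextT Γ t), e2.2) ∈ Γ := by
      have : e2 = ((minS Γ (nextT Γ t), nextT Γ t), e2.2) := by
        rw [← he2p]
      rwa [← this]
    exact pickEdge_mem this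
  exact ⟨htt', nextT_le hall t, hst, hm', hmin, ⟨e2, he2, he2p⟩, hpm⟩

end Connected

/-! ### The `SameRun` predicate -/

/-- The algorithm, started at `t` with the given fuel, makes the same choices on `Δ`
as on `Γ` (anchored along the trajectory of `Γ`). -/
def SameRun (b : ℕ) (Γ Δ : Finset LEdge) : ℕ → ℕ → Prop
  | 0, _ => True
  | fuel + 1, t => b ≤ t ∨
      (nextT Δ t = nextT Γ t ∧ minS' Δ (nextT Γ t) = minS' Γ (nextT Γ t) ∧
        ((((minS Γ (nextT Γ t), nextT Γ t), true) ∈ Δ) ↔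
          (((minS Γ (nextT Γ t), nextT Γ t), true) ∈ Γ)) ∧
        SameRun b Γ Δ fuel (nextT Γ t))

lemma laceAux_congr {Γ Δ : Finset LEdge} {b : ℕ} :
    ∀ fuel t, SameRun b Γ Δ fuel t → laceAux Δ b fuel t = laceAux Γ b fuel t := by
  intro fuel
  induction fuel with
  | zero => intro t _; rfl
  | succ n ih =>
    intro t h
    by_cases hb : b ≤ t
    · simp [laceAux, hb]
    · rcases h with hb' | ⟨h1, h2, h3, h4⟩
      · exact absurd hb' hb
      · have hm : minS Δ (nextT Γ t) = minS Γ (nextT Γ t) := minS_congr h2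
        simp only [laceAux, if_neg hb]
        rw [h1, hm, pickEdge_congr h3, ih _ h4]

lemma sameRun_refl (b : ℕ) (Γ : Finset LEdge) : ∀ fuel t, SameRun b Γ Γ fuel t := by
  intro fuel
  induction fuel with
  | zero => intro t; trivial
  | succ n ih => intro t; exact Or.inr ⟨rfl, rfl, Iff.rfl, ih _⟩

lemma sameRun_symm {b : ℕ} {Γ Δ : Finset LEdge} :
    ∀ fuel t, SameRun b Γ Δ fuel t → SameRun b Δ Γ fuel t := by
  intro fuel
  induction fuel with
  | zero => intro t _; trivial
  | succ n ih =>
    intro t h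
    rcases h with hb | ⟨h1, h2, h3, h4⟩
    · exact Or.inl hb
    · have hm : minS Δ (nextT Γ t) = minS Γ (nextT Γ t) := minS_congr h2
      refine Or.inr ⟨h1.symm, ?_, ?_, ?_⟩
      · rw [h1]; exact h2.symm
      · rw [h1, hm]; exact h3.symm
      · rw [h1]; exact ih _ h4

lemma nextT_union (Δ₁ Δ₂ : Finset LEdge) (t : ℕ) :
    nextT (Δ₁ ∪ Δ₂) t = nextT Δ₁ t ⊔ nextT Δ₂ t := by
  unfold nextT; rw [Finset.filter_union, Finset.sup_union]

lemma minS'_union (Δ₁ Δ₂ : Finset LEdge) (t : ℕ) :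
    minS' (Δ₁ ∪ Δ₂) t = minS' Δ₁ t ⊓ minS' Δ₂ t := by
  unfold minS'; rw [Finset.filter_union, Finset.image_union, Finset.min_union]

lemma T1_union (a : ℕ) (Δ₁ Δ₂ : Finset LEdge) :
    T1 a (Δ₁ ∪ Δ₂) = T1 a Δ₁ ⊔ T1 a Δ₂ := by
  unfold T1; rw [Finset.filter_union, Finset.sup_union]

lemma sameRun_union {b : ℕ} {Γ Δ₁ Δ₂ : Finset LEdge} :
    ∀ fuel t, SameRun b Γ Δ₁ fuel t → SameRun b Γ Δ₂ fuel t →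
      SameRun b Γ (Δ₁ ∪ Δ₂) fuel t := by
  intro fuel
  induction fuel with
  | zero => intro t _ _; trivial
  | succ n ih =>
    intro t h1 h2
    rcases h1 with hb | ⟨a1, a2, a3, a4⟩
    · exact Or.inl hb
    rcases h2 with hb | ⟨b1, b2, b3, b4⟩
    · exact Or.inl hb
    refine Or.inr ⟨?_, ?_, ?_, ih _ a4 b4⟩
    · rw [nextT_union, a1, b1, sup_idem]
    · rw [minS'_union, a2, b2, inf_idem]
    · simp [Finset.mem_union, a3, b3]

/-! ### The sandwich lemma -/

lemma sameRun_sandwich {a b : ℕ} {Γ Δ : Finset LEdge} (hall : Γ ⊆ allLEdges a b)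
    (hc : LConnected a b Γ) (hΔ : Δ ⊆ Γ) :
    ∀ fuel t, a < t → laceAux Γ b fuel t ⊆ Δ → SameRun b Γ Δ fuel t := by
  intro fuel
  induction fuel with
  | zero => intro t _ _; trivial
  | succ n ih =>
    intro t hat hsub
    by_cases hb : b ≤ t
    · exact Or.inl hb
    push_neg at hb
    obtain ⟨htt', ht'b, hst, hm', hmin, ⟨e2, he2, he2p⟩, hpm⟩ := step_facts hall hc hat hb
    have hlace : laceAux Γ b (n + 1) t
        = insert (pickEdge Γ (minS Γ (nextT Γ t)) (nextT Γ t)) (laceAux Γ b n (nextT Γ t)) := by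
      simp only [laceAux, if_neg (not_le.2 hb)]
    have hpΔ : pickEdge Γ (minS Γ (nextT Γ t)) (nextT Γ t) ∈ Δ := by
      apply hsub; rw [hlace]; exact Finset.mem_insert_self _ _
    have hpf1 := pickEdge_fst1 Γ (minS Γ (nextT Γ t)) (nextT Γ t)
    have hpf2 := pickEdge_fst2 Γ (minS Γ (nextT Γ t)) (nextT Γ t)
    have hnT : nextT Δ t = nextT Γ t := by
      refine le_antisymm (Finset.sup_mono (Finset.filter_subset_filter _ hΔ)) ?_
      have : pickEdge Γ (minS Γ (nextT Γ t)) (nextT Γ t) ∈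
          Δ.filter (fun e => e.1.1 < t) :=
        Finset.mem_filter.2 ⟨hpΔ, by rw [hpf1]; exact hst⟩
      calc nextT Γ t = (pickEdge Γ (minS Γ (nextT Γ t)) (nextT Γ t)).1.2 := hpf2.symm
        _ ≤ nextT Δ t := Finset.le_sup (f := fun e => e.1.2) this
    have hmS : minS' Δ (nextT Γ t) = minS' Γ (nextT Γ t) := by
      refine le_antisymm ?_ ?_
      · rw [hm']
        have : (pickEdge Γ (minS Γ (nextT Γ t)) (nextT Γ t)).1.1 ∈
            ((Δ.filter (fun e => e.1.2 = nextT Γ t)).image (fun e => e.1.1)) :=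
          Finset.mem_image.2 ⟨_, Finset.mem_filter.2 ⟨hpΔ, hpf2⟩, rfl⟩
        rw [hpf1] at this
        exact Finset.min_le this
      · exact Finset.min_mono (Finset.image_subset_image (Finset.filter_subset_filter _ hΔ))
    have hiff : (((minS Γ (nextT Γ t), nextT Γ t), true) ∈ Δ) ↔
        (((minS Γ (nextT Γ t), nextT Γ t), true) ∈ Γ) := by
      constructor
      · exact fun h => hΔ h
      · intro h
        have : pickEdge Γ (minS Γ (nextT Γ t)) (nextT Γ t)
            = ((minS Γ (nextT Γ t), nextT Γ t), true) := by
          unfold pickEdge; rw [if_pos h]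
        rwa [← this]
    refine Or.inr ⟨hnT, hmS, hiff, ih (nextT Γ t) (lt_trans hat htt') ?_⟩
    intro x hx
    apply hsub
    rw [hlace]
    exact Finset.mem_insert_of_mem hx

/-! ### `SameLace` -/

/-- The whole lace algorithm runs identically on `Γ` and `Δ`. -/
def SameLace (a b : ℕ) (Γ Δ : Finset LEdge) : Prop :=
  T1 a Δ = T1 a Γ ∧ ((((a, T1 a Γ), true) ∈ Δ) ↔ (((a, T1 a Γ), true) ∈ Γ)) ∧
    SameRun b Γ Δ (b - a) (T1 a Γ)

lemma laceOf_congr {a b : ℕ} {Γ Δ : Finset LEdge} (h : SameLace a b Γ Δ) :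
    laceOf a b Δ = laceOf a b Γ := by
  obtain ⟨h1, h2, h3⟩ := h
  rw [laceOf_def, laceOf_def, h1, pickEdge_congr h2, laceAux_congr _ _ h3]

lemma sameLace_refl (a b : ℕ) (Γ : Finset LEdge) : SameLace a b Γ Γ :=
  ⟨rfl, Iff.rfl, sameRun_refl _ _ _ _⟩

lemma sameLace_symm {a b : ℕ} {Γ Δ : Finset LEdge} (h : SameLace a b Γ Δ) :
    SameLace a b Δ Γ := by
  obtain ⟨h1, h2, h3⟩ := h
  refine ⟨h1.symm, ?_, ?_⟩
  · rw [h1]; exact h2.symm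
  · rw [h1]; exact sameRun_symm _ _ h3

lemma sameLace_union {a b : ℕ} {Γ Δ₁ Δ₂ : Finset LEdge} (h1 : SameLace a b Γ Δ₁)
    (h2 : SameLace a b Γ Δ₂) : SameLace a b Γ (Δ₁ ∪ Δ₂) := by
  refine ⟨?_, ?_, sameRun_union _ _ h1.2.2 h2.2.2⟩
  · rw [T1_union, h1.1, h2.1, sup_idem]
  · simp [Finset.mem_union, h1.2.1, h2.2.1]

lemma sameLace_sandwich {a b : ℕ} {Γ Δ : Finset LEdge} (hall : Γ ⊆ allLEdges a b)
    (hc : LConnected a b Γ) (hΔ : Δ ⊆ Γ) (hL : laceOf a b Γ ⊆ Δ) : SameLace a b Γ Δ := by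
  obtain ⟨⟨e0, he0, he0p⟩, haT, hTb⟩ := T1_spec hall hc
  have hfmem : pickEdge Γ a (T1 a Γ) ∈ Δ := by
    apply hL; rw [laceOf_def]; exact Finset.mem_insert_self _ _
  have hpf1 := pickEdge_fst1 Γ a (T1 a Γ)
  have hpf2 := pickEdge_fst2 Γ a (T1 a Γ)
  refine ⟨?_, ?_, ?_⟩
  · refine le_antisymm (Finset.sup_mono (Finset.filter_subset_filter _ hΔ)) ?_
    have : pickEdge Γ a (T1 a Γ) ∈ Δ.filter (fun e => e.1.1 = a) :=
      Finset.mem_filter.2 ⟨hfmem, hpf1⟩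
    calc T1 a Γ = (pickEdge Γ a (T1 a Γ)).1.2 := hpf2.symm
      _ ≤ T1 a Δ := Finset.le_sup (f := fun e => e.1.2) this
  · constructor
    · exact fun h => hΔ h
    · intro h
      have : pickEdge Γ a (T1 a Γ) = ((a, T1 a Γ), true) := by
        unfold pickEdge; rw [if_pos h]
      rwa [← this]
  · refine sameRun_sandwich hall hc hΔ _ _ haT ?_
    intro x hx
    apply hL
    rw [laceOf_def]
    exact Finset.mem_insert_of_mem hx

/-! ### Consequences for connected graphs -/

lemma laceAux_subset {a b : ℕ} {Γ : Finset LEdge} (hall : Γ ⊆ allLEdges a b)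
    (hc : LConnected a b Γ) : ∀ fuel t, a < t → laceAux Γ b fuel t ⊆ Γ := by
  intro fuel
  induction fuel with
  | zero => intro t _; simp [laceAux]
  | succ n ih =>
    intro t hat
    by_cases hb : b ≤ t
    · simp [laceAux, hb]
    push_neg at hb
    obtain ⟨htt', _, _, _, _, _, hpm⟩ := step_facts hall hc hat hb
    simp only [laceAux, if_neg (not_le.2 hb)]
    exact Finset.insert_subset hpm (ih (nextT Γ t) (lt_trans hat htt'))

lemma laceOf_subset {a b : ℕ} {Γ : Finset LEdge} (hall : Γ ⊆ allLEdges a b)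
    (hc : LConnected a b Γ) : laceOf a b Γ ⊆ Γ := by
  obtain ⟨⟨e0, he0, he0p⟩, haT, hTb⟩ := T1_spec hall hc
  rw [laceOf_def]
  refine Finset.insert_subset ?_ (laceAux_subset hall hc _ _ haT)
  have : ((a, T1 a Γ), e0.2) ∈ Γ := by
    have he : e0 = ((a, T1 a Γ), e0.2) := by rw [← he0p]
    rwa [← he]
  exact pickEdge_mem this

lemma laceAux_cover {a b : ℕ} {Γ : Finset LEdge} (hall : Γ ⊆ allLEdges a b)
    (hc : LConnected a b Γ) : ∀ fuel t, a < t → b ≤ t + fuel →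
      ∀ j, t ≤ j → j < b → ∃ e ∈ laceAux Γ b fuel t, e.1.1 < j ∧ j < e.1.2 := by
  intro fuel
  induction fuel with
  | zero => intro t _ hbt j htj hjb; omega
  | succ n ih =>
    intro t hat hbt j htj hjb
    have htb : t < b := lt_of_le_of_lt htj hjb
    obtain ⟨htt', ht'b, hst, _, _, _, hpm⟩ := step_facts hall hc hat htb
    have hlace : laceAux Γ b (n + 1) t
        = insert (pickEdge Γ (minS Γ (nextT Γ t)) (nextT Γ t)) (laceAux Γ b n (nextT Γ t)) := by
      simp only [laceAux, if_neg (not_le.2 htb)]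
    rcases lt_or_ge j (nextT Γ t) with hj | hj
    · refine ⟨pickEdge Γ (minS Γ (nextT Γ t)) (nextT Γ t), ?_, ?_⟩
      · rw [hlace]; exact Finset.mem_insert_self _ _
      · rw [pickEdge_fst1, pickEdge_fst2]
        exact ⟨lt_of_lt_of_le hst htj, hj⟩
    · obtain ⟨e, he, h⟩ := ih (nextT Γ t) (lt_trans hat htt') (by omega) j hj hjb
      exact ⟨e, by rw [hlace]; exact Finset.mem_insert_of_mem he, h⟩

lemma laceAux_top {a b : ℕ} {Γ : Finset LEdge} (hall : Γ ⊆ allLEdges a b)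
    (hc : LConnected a b Γ) : ∀ fuel t, a < t → t < b → b ≤ t + fuel →
      ∃ e ∈ laceAux Γ b fuel t, e.1.2 = b := by
  intro fuel
  induction fuel with
  | zero => intro t _ htb hbt; omega
  | succ n ih =>
    intro t hat htb hbt
    obtain ⟨htt', ht'b, hst, _, _, _, hpm⟩ := step_facts hall hc hat htb
    have hlace : laceAux Γ b (n + 1) t
        = insert (pickEdge Γ (minS Γ (nextT Γ t)) (nextT Γ t)) (laceAux Γ b n (nextT Γ t)) := by
      simp only [laceAux, if_neg (not_le.2 htb)]
    rcases lt_or_ge (nextT Γ t) b with hb' | hb'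
    · obtain ⟨e, he, h⟩ := ih (nextT Γ t) (lt_trans hat htt') hb' (by omega)
      exact ⟨e, by rw [hlace]; exact Finset.mem_insert_of_mem he, h⟩
    · refine ⟨pickEdge Γ (minS Γ (nextT Γ t)) (nextT Γ t), ?_, ?_⟩
      · rw [hlace]; exact Finset.mem_insert_self _ _
      · rw [pickEdge_fst2]; omega

lemma laceOf_connected {a b : ℕ} {Γ : Finset LEdge} (hall : Γ ⊆ allLEdges a b)
    (hc : LConnected a b Γ) : LConnected a b (laceOf a b Γ) := by
  obtain ⟨⟨e0, he0, he0p⟩, haT, hTb⟩ := T1_spec hall hc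
  have hfmem : pickEdge Γ a (T1 a Γ) ∈ laceOf a b Γ := by
    rw [laceOf_def]; exact Finset.mem_insert_self _ _
  have hpf1 := pickEdge_fst1 Γ a (T1 a Γ)
  have hpf2 := pickEdge_fst2 Γ a (T1 a Γ)
  refine ⟨hc.1, ?_, ⟨_, hfmem, hpf1⟩, ?_⟩
  · intro j haj hjb
    rcases lt_or_ge j (T1 a Γ) with hj | hj
    · exact ⟨_, hfmem, by rw [hpf1, hpf2]; exact ⟨haj, hj⟩⟩
    · obtain ⟨e, he, h⟩ := laceAux_cover hall hc (b - a) (T1 a Γ) haT (by omega) j hj hjb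
      exact ⟨e, by rw [laceOf_def]; exact Finset.mem_insert_of_mem he, h⟩
  · rcases lt_or_ge (T1 a Γ) b with hb' | hb'
    · obtain ⟨e, he, h⟩ := laceAux_top hall hc (b - a) (T1 a Γ) haT hb' (by omega)
      exact ⟨e, by rw [laceOf_def]; exact Finset.mem_insert_of_mem he, h⟩
    · exact ⟨_, hfmem, by rw [hpf2]; omega⟩

lemma lconn_mono {a b : ℕ} {L Γ : Finset LEdge} (h : LConnected a b L) (hsub : L ⊆ Γ) :
    LConnected a b Γ := by
  obtain ⟨h1, h2, ⟨e1, he1, he1'⟩, ⟨e2, he2, he2'⟩⟩ := h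
  exact ⟨h1, fun j hj hj' => (h2 j hj hj').imp (fun e he => ⟨hsub he.1, he.2⟩),
    ⟨e1, hsub he1, he1'⟩, ⟨e2, hsub he2, he2'⟩⟩

lemma laceOf_idem {a b : ℕ} {Γ : Finset LEdge} (hall : Γ ⊆ allLEdges a b)
    (hc : LConnected a b Γ) : laceOf a b (laceOf a b Γ) = laceOf a b Γ :=
  laceOf_congr (sameLace_sandwich hall hc (laceOf_subset hall hc) (subset_refl _))

lemma compat_of_mem {a b : ℕ} {Γ : Finset LEdge} (hall : Γ ⊆ allLEdges a b)
    (hc : LConnected a b Γ) {e : LEdge} (he : e ∈ Γ) :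
    laceOf a b (insert e (laceOf a b Γ)) = laceOf a b Γ :=
  laceOf_congr (sameLace_sandwich hall hc
    (Finset.insert_subset he (laceOf_subset hall hc)) (Finset.subset_insert _ _))

/-! ### Reconstruction -/

lemma sameLace_of_compat {a b : ℕ} {L : Finset LEdge} (hL : IsLace a b L)
    (hLall : L ⊆ allLEdges a b) {e : LEdge} (he : e ∈ compatEdges a b L) :
    SameLace a b L (insert e L) := by
  have heall : e ∈ allLEdges a b := (Finset.mem_filter.1 he).1
  obtain ⟨hnel, hlace⟩ := (Finset.mem_filter.1 he).2
  have hall' : insert e L ⊆ allLEdges a b := Finset.insert_subset heall hLall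
  have hc' : LConnected a b (insert e L) := lconn_mono hL.1 (Finset.subset_insert _ _)
  exact sameLace_symm
    (sameLace_sandwich hall' hc' (Finset.subset_insert _ _) (by rw [hlace]))

lemma sameLace_union_compat {a b : ℕ} {L : Finset LEdge} (hL : IsLace a b L)
    (hLall : L ⊆ allLEdges a b) :
    ∀ S : Finset LEdge, S ⊆ compatEdges a b L → SameLace a b L (L ∪ S) := by
  intro S
  induction S using Finset.induction_on with
  | empty => intro _; simpa using sameLace_refl a b L
  | @insert x S hx ih =>
    intro hS
    have hrw : L ∪ insert x S = (L ∪ S) ∪ (insert x L) := by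
      ext y; simp only [Finset.mem_union, Finset.mem_insert]; tauto
    rw [hrw]
    refine sameLace_union (ih fun y hy => hS (Finset.mem_insert_of_mem hy)) ?_
    exact sameLace_of_compat hL hLall (hS (Finset.mem_insert_self _ _))

/-! ### The fiber characterization -/

lemma fiber_eq {a b : ℕ} (L : Finset LEdge)
    (hLall : L ⊆ allLEdges a b) (hL : IsLace a b L) :
    ((allLEdges a b).powerset.filter (LConnected a b)).filter (fun Γ => laceOf a b Γ = L)
      = (compatEdges a b L).powerset.image (fun S => L ∪ S) := by
  ext Γ
  simp only [Finset.mem_filter, Finset.mem_powerset, Finset.mem_image]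
  constructor
  · rintro ⟨⟨hall, hc⟩, hlace⟩
    refine ⟨Γ \ L, ?_, ?_⟩
    · intro e he
      obtain ⟨heΓ, heL⟩ := Finset.mem_sdiff.1 he
      refine Finset.mem_filter.2 ⟨hall heΓ, heL, ?_⟩
      have := compat_of_mem hall hc heΓ
      rwa [hlace] at this
    · rw [Finset.union_sdiff_of_subset (by rw [← hlace]; exact laceOf_subset hall hc)]
  · rintro ⟨S, hS, rfl⟩
    have hSall : S ⊆ allLEdges a b := hS.trans (Finset.filter_subset _ _)
    have hall : L ∪ S ⊆ allLEdges a b := Finset.union_subset hLall hSall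
    have hc : LConnected a b (L ∪ S) := lconn_mono hL.1 (Finset.subset_union_left)
    exact ⟨⟨hall, hc⟩, by rw [laceOf_congr (sameLace_union_compat hL hLall S hS), hL.2]⟩

end LacePf

/-- **Lace prescription for labelled graphs.**  For every weight `w` on labelled edges,
the sum over connected labelled graphs on `{a,…,b}` of the product of edge weights
equals the sum over labelled laces `L` of the product of its edge weights times
`∏_{e' compatible with L} (1 + w e')`. -/
theorem lace_prescription (a b : ℕ) (hab : a < b) (w : LEdge → ℝ) :
    ∑ Γ ∈ (allLEdges a b).powerset.filter (LConnected a b), ∏ e ∈ Γ, w e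
      = ∑ L ∈ (allLEdges a b).powerset.filter (IsLace a b),
          (∏ e ∈ L, w e) * ∏ e' ∈ compatEdges a b L, (1 + w e') := by
  classical
  have hmaps : ∀ Γ ∈ (allLEdges a b).powerset.filter (LConnected a b),
      laceOf a b Γ ∈ (allLEdges a b).powerset.filter (IsLace a b) := by
    intro Γ hΓ
    obtain ⟨hmem, hc⟩ := Finset.mem_filter.1 hΓ
    have hall : Γ ⊆ allLEdges a b := Finset.mem_powerset.1 hmem
    refine Finset.mem_filter.2 ⟨Finset.mem_powerset.2
      ((LacePf.laceOf_subset hall hc).trans hall), ?_, ?_⟩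
    · exact LacePf.laceOf_connected hall hc
    · exact LacePf.laceOf_idem hall hc
  rw [← Finset.sum_fiberwise_of_maps_to hmaps (fun Γ => ∏ e ∈ Γ, w e)]
  refine Finset.sum_congr rfl fun L hL => ?_
  obtain ⟨hmem, hlace⟩ := Finset.mem_filter.1 hL
  have hLall : L ⊆ allLEdges a b := Finset.mem_powerset.1 hmem
  rw [LacePf.fiber_eq L hLall hlace]
  have hdisj : ∀ S ∈ (compatEdges a b L).powerset, Disjoint L S := by
    intro S hS
    rw [Finset.disjoint_right]
    intro x hx hxL
    exact (Finset.mem_filter.1 ((Finset.mem_powerset.1 hS) hx)).2.1 hxL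
  rw [Finset.sum_image ?hinj]
  case hinj =>
    intro S₁ h₁ S₂ h₂ h
    have e₁ : (L ∪ S₁) \ L = S₁ := Finset.union_sdiff_cancel_left (hdisj S₁ h₁)
    have e₂ : (L ∪ S₂) \ L = S₂ := Finset.union_sdiff_cancel_left (hdisj S₂ h₂)
    rw [← e₁, ← e₂, show L ∪ S₁ = L ∪ S₂ from h]
  have hsplit : ∀ S ∈ (compatEdges a b L).powerset,
      ∏ e ∈ L ∪ S, w e = (∏ e ∈ L, w e) * ∏ e ∈ S, w e := by
    intro S hS
    exact Finset.prod_union (hdisj S hS)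
  rw [Finset.sum_congr rfl hsplit, ← Finset.mul_sum]
  congr 1
  calc ∑ S ∈ (compatEdges a b L).powerset, ∏ e ∈ S, w e
      = ∑ S ∈ (compatEdges a b L).powerset, (∏ e ∈ S, w e) * ∏ e ∈ compatEdges a b L \ S, (1:ℝ) := by
        simp
    _ = ∏ e' ∈ compatEdges a b L, (w e' + 1) := (Finset.prod_add _ _ _).symm
    _ = ∏ e' ∈ compatEdges a b L, (1 + w e') := by simp [add_comm]
end

section
/- Let D̂(k) = (1/d)·Σ_{j=1}^d cos(k_j) for k ∈ [−π,π]^d. For every positive integer r there is a constant K, independent of d, such that for all dimensions d > 2r the integral ∫_{[−π,π]^d} (1 − D̂(k))^{−r} d^d k/(2π)^d is finite and at most 1 + K/d. -/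
open MeasureTheory Real

noncomputable section

/-- The Fourier transform `D̂(k) = (1/d)·Σ_{j=1}^d cos(k_j)` of the single-step
distribution of simple random walk on ℤ^d. -/
def Dhat (d : ℕ) (k : Fin d → ℝ) : ℝ := (1 / (d : ℝ)) * ∑ j, Real.cos (k j)

open Set
open scoped ENNReal

lemma aux_ineq (r : ℕ) : (5*(r:ℝ)+4) ≤ 7^r*((r:ℝ)+8) := by
  rcases r with _ | s
  · norm_num
  · have h7 : (7:ℝ) ≤ 7^(s+1) := by
      calc (7:ℝ) = 7^1 := (pow_one 7).symm
      _ ≤ 7^(s+1) := pow_le_pow_right₀ (by norm_num) (by omega)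
    have : (0:ℝ) ≤ s := Nat.cast_nonneg s
    push_cast
    nlinarith

lemma taylor_ineq (r : ℕ) {y : ℝ} (h1 : 1/4 ≤ y) (h2 : y ≤ 2) :
    (y⁻¹)^r ≤ 1 - r*(y-1) + (7^r*((r:ℝ)+1))*(y-1)^2 := by
  induction r with
  | zero => simp; nlinarith [sq_nonneg (y-1)]
  | succ s ih =>
    have hy : (0:ℝ) < y := by linarith
    have hinv : (0:ℝ) ≤ y⁻¹ := by positivity
    have hB : y⁻¹ ≤ 1 - (y-1) + 4*(y-1)^2 := by
      rw [inv_le_iff_one_le_mul₀ hy]  -- guess name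
      nlinarith [sq_nonneg (y-1)]
    have hApos : (0:ℝ) ≤ 1 - s*(y-1) + (7^s*((s:ℝ)+1))*(y-1)^2 :=
      le_trans (by positivity) ih
    have key : (y⁻¹)^(s+1) ≤ (1 - s*(y-1) + (7^s*((s:ℝ)+1))*(y-1)^2) * (1 - (y-1) + 4*(y-1)^2) := by
      rw [pow_succ]
      exact mul_le_mul ih hB hinv hApos
    refine key.trans ?_
    set u := y - 1 with hu
    have hu1 : -(3/4) ≤ u := by simp [hu]; linarith
    have hu2 : u ≤ 1 := by simp [hu]; linarith
    set C := (7:ℝ)^s*((s:ℝ)+1) with hC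
    have hC1 : (1:ℝ) ≤ C := by
      have : (1:ℝ) ≤ 7^s := one_le_pow₀ (by norm_num)
      have : (0:ℝ) ≤ s := Nat.cast_nonneg s
      nlinarith
    have hC' : 6*C + 5*s + 4 ≤ 7^(s+1)*((s:ℝ)+1+1) := by
      have h := aux_ineq s
      have : (7:ℝ)^(s+1)*((s:ℝ)+2) = 6*C + 7^s*((s:ℝ)+8) := by
        rw [hC, pow_succ]; ring
      rw [show ((s:ℝ)+1+1) = (s:ℝ)+2 by ring, this]
      linarith
    have h3 : -u^2 ≤ u^3 := by nlinarith
    have h3' : u^3 ≤ u^2 := by nlinarith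
    have h4 : u^4 ≤ u^2 := by nlinarith
    have hsnn : (0:ℝ) ≤ (s:ℝ) := Nat.cast_nonneg s
    push_cast
    nlinarith [mul_le_mul_of_nonneg_left h3 (by linarith : (0:ℝ) ≤ 4*(s:ℝ)+C),
      mul_le_mul_of_nonneg_left h4 (by linarith : (0:ℝ) ≤ 4*C),
      sq_nonneg u]

lemma g_nonneg (r : ℕ) (t : ℝ) : 0 ≤ 1 - r*t + (7^r*((r:ℝ)+1))*t^2 := by
  have h2 : (r:ℝ) < 2^r := by exact_mod_cast Nat.lt_two_pow_self (n := r)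
  have h47 : (4:ℝ)^r ≤ 7^r := pow_le_pow_left₀ (by norm_num) (by norm_num) r
  have h44 : ((2:ℝ)^r)^2 = 4^r := by rw [← pow_mul, mul_comm, pow_mul]; norm_num
  have hC1 : (1:ℝ) ≤ 7^r*((r:ℝ)+1) := by
    have : (1:ℝ) ≤ 7^r := one_le_pow₀ (by norm_num)
    nlinarith [Nat.cast_nonneg (α := ℝ) r]
  nlinarith [sq_nonneg (2*(7^r*((r:ℝ)+1))*t - r), Nat.cast_nonneg (α := ℝ) r,
    sq_nonneg ((2:ℝ)^r)]

noncomputable def TT (d : ℕ) : Set (Fin d → ℝ) := Set.univ.pi fun _ : Fin d => Set.Icc (-π) π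

lemma isCompact_TT (d : ℕ) : IsCompact (TT d) := isCompact_univ_pi fun _ => isCompact_Icc

lemma prod_integral (d : ℕ) (f : Fin d → ℝ → ℝ) :
    ∫ k in TT d, ∏ i, f i (k i) = ∏ i, ∫ x in Icc (-π) π, f i x := by
  rw [← integral_indicator (isCompact_TT d).measurableSet]
  have : (TT d).indicator (fun k => ∏ i, f i (k i))
      = fun k => ∏ i, (Icc (-π) π).indicator (f i) (k i) := by
    funext k
    by_cases hk : k ∈ TT d
    · rw [indicator_of_mem hk]
      rw [TT, Set.mem_univ_pi] at hk
      exact (Finset.prod_congr rfl fun i _ => (indicator_of_mem (hk i) (f i)).symm)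
    · rw [indicator_of_notMem hk]
      rw [TT, Set.mem_univ_pi] at hk
      push_neg at hk
      obtain ⟨i, hi⟩ := hk
      exact (Finset.prod_eq_zero (Finset.mem_univ i) (indicator_of_notMem hi (f i))).symm
  rw [this, volume_pi, MeasureTheory.integral_fintype_prod_eq_prod
    (fun i => (Icc (-π) π).indicator (f i))]
  exact Finset.prod_congr rfl fun i _ => integral_indicator measurableSet_Icc

lemma I1 : ∫ x in Icc (-π) π, (1:ℝ) = 2*π := by
  rw [setIntegral_const, volume_real_Icc_of_le (by linarith [pi_pos] : -π ≤ π), smul_eq_mul, mul_one]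
  ring

lemma I2 : ∫ x in Icc (-π) π, Real.cos x = 0 := by
  rw [integral_Icc_eq_integral_Ioc, ← intervalIntegral.integral_of_le (by linarith [pi_pos] : -π ≤ π)]
  simp [integral_cos]

lemma I3 : ∫ x in Icc (-π) π, Real.cos x ^ 2 = π := by
  rw [integral_Icc_eq_integral_Ioc, ← intervalIntegral.integral_of_le (by linarith [pi_pos] : -π ≤ π)]
  rw [integral_cos_sq]
  norm_num

lemma I4 {b c : ℝ} (hb : 0 < b) :
    ∫ x in Icc (-π) π, Real.exp (c - b*(1-Real.cos x)) ≤ Real.exp c * Real.sqrt (π^3/(2*b)) := by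
  have ha : 0 < 2*b/π^2 := by positivity
  have hpt : ∀ x ∈ Icc (-π) π, Real.exp (c - b*(1-Real.cos x))
      ≤ Real.exp c * Real.exp (-(2*b/π^2) * x^2) := by
    intro x hx
    rw [← Real.exp_add]
    apply Real.exp_le_exp.mpr
    have hcos := Real.cos_le_one_sub_mul_cos_sq (x := x) (by
      rw [abs_le]; exact ⟨hx.1, hx.2⟩)
    have h2 : 2*x^2/π^2 ≤ 1 - Real.cos x := by
      rw [div_mul_eq_mul_div] at hcos; linarith
    have h3 := mul_le_mul_of_nonneg_left h2 hb.le
    have heq : -(2*b/π^2) * x^2 = -(b * (2*x^2/π^2)) := by ring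
    rw [heq]; linarith
  have hint1 : IntegrableOn (fun x => Real.exp (c - b*(1-Real.cos x))) (Icc (-π) π) :=
    (Continuous.continuousOn (by continuity)).integrableOn_compact isCompact_Icc
  have hint2 : Integrable (fun x : ℝ => Real.exp c * Real.exp (-(2*b/π^2) * x^2)) :=
    (integrable_exp_neg_mul_sq ha).const_mul _
  calc ∫ x in Icc (-π) π, Real.exp (c - b*(1-Real.cos x))
      ≤ ∫ x in Icc (-π) π, Real.exp c * Real.exp (-(2*b/π^2) * x^2) :=
        setIntegral_mono_on hint1 hint2.integrableOn measurableSet_Icc hpt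
    _ ≤ ∫ x : ℝ, Real.exp c * Real.exp (-(2*b/π^2) * x^2) :=
        setIntegral_le_integral hint2 (Filter.Eventually.of_forall fun x => by positivity)
    _ = Real.exp c * Real.sqrt (π^3/(2*b)) := by
        rw [integral_const_mul, integral_gaussian,
          show π/(2*b/π^2) = π^3/(2*b) by field_simp]

lemma intT_one (d : ℕ) : ∫ k in TT d, (1:ℝ) = (2*π)^d := by
  have h := prod_integral d (fun _ _ => (1:ℝ))
  simp only [Finset.prod_const, one_pow, I1, Finset.card_univ, Fintype.card_fin] at h
  exact h

lemma intT_cos (d : ℕ) (j : Fin d) : ∫ k in TT d, Real.cos (k j) = 0 := by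
  have := prod_integral d (fun i => if i = j then Real.cos else fun _ => 1)
  have hL : ∀ k : Fin d → ℝ, (∏ i, (if i = j then Real.cos else fun _ => (1:ℝ)) (k i))
      = Real.cos (k j) := by
    intro k
    rw [Finset.prod_eq_single j]
    · simp
    · intro i _ hij; simp [hij]
    · simp
  rw [show (fun k : Fin d → ℝ => Real.cos (k j)) = fun k => ∏ i, (if i = j then Real.cos else fun _ => (1:ℝ)) (k i) from funext fun k => (hL k).symm]
  rw [this]
  exact Finset.prod_eq_zero (Finset.mem_univ j) (by simp [I2])

lemma intT_coscos (d : ℕ) {i j : Fin d} (hij : i ≠ j) :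
    ∫ k in TT d, Real.cos (k i) * Real.cos (k j) = 0 := by
  have := prod_integral d (fun l => if l = i then Real.cos else if l = j then Real.cos else fun _ => 1)
  have hL : ∀ k : Fin d → ℝ,
      (∏ l, (if l = i then Real.cos else if l = j then Real.cos else fun _ => (1:ℝ)) (k l))
      = Real.cos (k i) * Real.cos (k j) := by
    intro k
    rw [← Finset.mul_prod_erase _ _ (Finset.mem_univ i)]
    rw [← Finset.mul_prod_erase _ _ (Finset.mem_erase.mpr ⟨hij.symm, Finset.mem_univ j⟩)]
    rw [Finset.prod_eq_one (fun l hl => by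
      simp only [Finset.mem_erase] at hl
      simp [hl.1, hl.2.1])]
    simp [hij.symm]
  rw [show (fun k : Fin d → ℝ => Real.cos (k i) * Real.cos (k j))
      = fun k => ∏ l, (if l = i then Real.cos else if l = j then Real.cos else fun _ => (1:ℝ)) (k l) from funext fun k => (hL k).symm]
  rw [this]
  exact Finset.prod_eq_zero (Finset.mem_univ i) (by simp [I2])

lemma intT_cossq (d : ℕ) (i : Fin d) :
    ∫ k in TT d, Real.cos (k i)^2 = π * (2*π)^(d-1) := by
  have := prod_integral d (fun l => if l = i then (fun x => Real.cos x ^ 2) else fun _ => 1)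
  have hL : ∀ k : Fin d → ℝ,
      (∏ l, (if l = i then (fun x => Real.cos x ^2) else fun _ => (1:ℝ)) (k l))
      = Real.cos (k i)^2 := by
    intro k
    rw [Finset.prod_eq_single i]
    · simp
    · intro l _ hl; simp [hl]
    · simp
  rw [show (fun k : Fin d → ℝ => Real.cos (k i)^2)
      = fun k => ∏ l, (if l = i then (fun x => Real.cos x ^2) else fun _ => (1:ℝ)) (k l) from funext fun k => (hL k).symm]
  rw [this]
  rw [← Finset.mul_prod_erase _ _ (Finset.mem_univ i)]
  rw [show (∫ x in Icc (-π) π, (if i = i then (fun x => Real.cos x^2) else fun _ => (1:ℝ)) x) = π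
    from by rw [if_pos rfl]; exact I3]
  rw [Finset.prod_congr rfl (fun l hl => by
    have h := (Finset.mem_erase.mp hl).1
    simp only [if_neg h]
    exact I1), Finset.prod_const, Finset.card_erase_of_mem (Finset.mem_univ i),
    Finset.card_univ, Fintype.card_fin]

lemma contIntTT {d : ℕ} {f : (Fin d → ℝ) → ℝ} (hf : Continuous f) : IntegrableOn f (TT d) :=
  hf.continuousOn.integrableOn_compact (isCompact_TT d)

lemma cont_sumcos (d : ℕ) : Continuous (fun k : Fin d → ℝ => ∑ j, Real.cos (k j)) :=
  continuous_finset_sum _ fun j _ => Real.continuous_cos.comp (continuous_apply j)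

lemma intT_sum (d : ℕ) : ∫ k in TT d, (∑ j, Real.cos (k j)) = 0 := by
  rw [integral_finset_sum (f := fun (j : Fin d) (k : Fin d → ℝ) => Real.cos (k j)) _
    (fun j _ => contIntTT (by fun_prop))]
  simp [intT_cos]

lemma intT_sumsq (d : ℕ) :
    ∫ k in TT d, (∑ j, Real.cos (k j))^2 = d * (π * (2*π)^(d-1)) := by
  have hexp : ∀ k : Fin d → ℝ, (∑ j, Real.cos (k j))^2
      = ∑ i, ∑ j, Real.cos (k i) * Real.cos (k j) := by
    intro k; rw [sq, Finset.sum_mul_sum]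
  have hint : ∀ i j : Fin d,
      IntegrableOn (fun k : Fin d → ℝ => Real.cos (k i) * Real.cos (k j)) (TT d) :=
    fun i j => contIntTT (by fun_prop)
  have hint2 : ∀ i : Fin d,
      IntegrableOn (fun k : Fin d → ℝ => ∑ j, Real.cos (k i) * Real.cos (k j)) (TT d) :=
    fun i => contIntTT (by fun_prop)
  calc ∫ k in TT d, (∑ j, Real.cos (k j))^2
      = ∫ k in TT d, ∑ i, ∑ j, Real.cos (k i) * Real.cos (k j) := by simp_rw [hexp]
    _ = ∑ i, ∫ k in TT d, ∑ j, Real.cos (k i) * Real.cos (k j) :=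
        integral_finset_sum _ (fun i _ => hint2 i)
    _ = ∑ _i : Fin d, (π * (2*π)^(d-1)) := Finset.sum_congr rfl (fun i _ => by
        rw [integral_finset_sum _ (fun j _ => hint i j)]
        rw [Finset.sum_eq_single i]
        · rw [← intT_cossq d i]; congr 1; funext k; ring
        · intro j _ hji; exact intT_coscos d (Ne.symm hji)
        · simp)
    _ = d * (π * (2*π)^(d-1)) := by
        rw [Finset.sum_const, Finset.card_univ, Fintype.card_fin, nsmul_eq_mul]

lemma intT_quad (d : ℕ) (a b : ℝ) :
    ∫ k in TT d, (1 + a * (∑ j, Real.cos (k j)) + b * (∑ j, Real.cos (k j))^2)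
      = (2*π)^d + b * (d * (π * (2*π)^(d-1))) := by
  have h1 : IntegrableOn (fun _ : Fin d → ℝ => (1:ℝ)) (TT d) := contIntTT continuous_const
  have h2 : IntegrableOn (fun k : Fin d → ℝ => a * (∑ j, Real.cos (k j))) (TT d) :=
    contIntTT (continuous_const.mul (cont_sumcos d))
  have h3 : IntegrableOn (fun k : Fin d → ℝ => b * (∑ j, Real.cos (k j))^2) (TT d) :=
    contIntTT (continuous_const.mul ((cont_sumcos d).pow 2))
  have h12 : IntegrableOn (fun k : Fin d → ℝ => 1 + a * (∑ j, Real.cos (k j))) (TT d) :=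
    h1.add h2
  rw [integral_add h12 h3, integral_add h1 h2, integral_const_mul, integral_const_mul,
    intT_one, intT_sum, intT_sumsq]
  ring

lemma continuous_Dhat (d : ℕ) : Continuous (Dhat d) :=
  continuous_const.mul (continuous_finset_sum _ fun j _ =>
    Real.continuous_cos.comp (continuous_apply j))

lemma sum_one_sub_cos {d : ℕ} (hd : 0 < d) (k : Fin d → ℝ) :
    ∑ j, (1 - Real.cos (k j)) = d * (1 - Dhat d k) := by
  have hd' : (d:ℝ) ≠ 0 := Nat.cast_ne_zero.mpr hd.ne'
  rw [Finset.sum_sub_distrib, Finset.sum_const, Finset.card_univ, Fintype.card_fin, Dhat]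
  field_simp <;> ring

lemma measurableSet_small {d : ℕ} (t : ℝ) :
    MeasurableSet {k : Fin d → ℝ | 1 - Dhat d k < t} :=
  (isOpen_lt (continuous_const.sub (continuous_Dhat d)) continuous_const).measurableSet

lemma smallball {d : ℕ} (hd : 0 < d) (n : ℕ) :
    volume ({k : Fin d → ℝ | 1 - Dhat d k < (1/4:ℝ)^(n+1)} ∩ TT d)
      ≤ ENNReal.ofReal ((Real.exp (1/2) * (π * Real.sqrt π) / 2^(n+1))^d) := by
  set b : ℝ := 2 * 4^n with hbdef
  set t : ℝ := (1/4:ℝ)^(n+1) with htdef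
  have hb : (0:ℝ) < b := by positivity
  have ht : (0:ℝ) < t := by positivity
  have h4 : (4:ℝ)^n * (1/4)^n = 1 := by rw [← mul_pow]; norm_num
  have hbt : b * t = 1/2 := by
    calc b * t = (2*4^n) * ((1/4)^n * (1/4)) := by rw [hbdef, htdef, pow_succ]
      _ = (4^n * (1/4)^n) * (1/2) := by ring
      _ = 1/2 := by rw [h4]; ring
  set S := {k : Fin d → ℝ | 1 - Dhat d k < t} with hSdef
  have hS : MeasurableSet S := measurableSet_small t
  have hcont : Continuous (fun k : Fin d → ℝ =>
      ∏ j, Real.exp (b*t - b*(1 - Real.cos (k j)))) := by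
    apply continuous_finset_prod
    intro j _
    fun_prop
  have hpt : ∀ k : Fin d → ℝ, S.indicator (fun _ => (1:ℝ≥0∞)) k
      ≤ ENNReal.ofReal (∏ j, Real.exp (b*t - b*(1 - Real.cos (k j)))) := by
    intro k
    by_cases hk : k ∈ S
    · rw [indicator_of_mem hk]
      rw [← Real.exp_sum]
      apply ENNReal.one_le_ofReal.mpr
      apply Real.one_le_exp
      have hsum : ∑ j, (b*t - b*(1 - Real.cos (k j)))
          = b * (d * t) - b * (d * (1 - Dhat d k)) := by
        rw [Finset.sum_sub_distrib, Finset.sum_const, Finset.card_univ, Fintype.card_fin,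
          ← Finset.mul_sum, sum_one_sub_cos hd]
        push_cast
        ring
      rw [hsum]
      have hk' : 1 - Dhat d k < t := hk
      have hd0 : (0:ℝ) < d := Nat.cast_pos.mpr hd
      nlinarith [mul_nonneg (mul_pos hb hd0).le (by linarith : (0:ℝ) ≤ t - (1 - Dhat d k))]
    · rw [indicator_of_notMem hk]
      exact zero_le
  have hnn : 0 ≤ᵐ[volume.restrict (TT d)]
      fun k : Fin d → ℝ => ∏ j, Real.exp (b*t - b*(1 - Real.cos (k j))) :=
    Filter.Eventually.of_forall fun k => by positivity
  calc volume (S ∩ TT d) = (volume.restrict (TT d)) S := (Measure.restrict_apply hS).symm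
    _ = ∫⁻ k in TT d, S.indicator (fun _ => (1:ℝ≥0∞)) k := (lintegral_indicator_one hS).symm
    _ ≤ ∫⁻ k in TT d, ENNReal.ofReal (∏ j, Real.exp (b*t - b*(1 - Real.cos (k j)))) :=
        lintegral_mono hpt
    _ = ENNReal.ofReal (∫ k in TT d, ∏ j, Real.exp (b*t - b*(1 - Real.cos (k j)))) :=
        (MeasureTheory.ofReal_integral_eq_lintegral_ofReal (contIntTT hcont) hnn).symm
    _ ≤ ENNReal.ofReal ((Real.exp (1/2) * (π * Real.sqrt π) / 2^(n+1))^d) := by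
        apply ENNReal.ofReal_le_ofReal
        rw [prod_integral d (fun _ x => Real.exp (b*t - b*(1 - Real.cos x))), Finset.prod_const,
          Finset.card_univ, Fintype.card_fin]
        apply pow_le_pow_left₀ (by
          apply setIntegral_nonneg measurableSet_Icc
          intro x _; positivity)
        calc ∫ x in Icc (-π) π, Real.exp (b*t - b*(1-Real.cos x))
            ≤ Real.exp (b*t) * Real.sqrt (π^3/(2*b)) := I4 hb
          _ = Real.exp (1/2) * (π * Real.sqrt π) / 2^(n+1) := by
              rw [hbt]
              have h2b : 2*b = (2^(n+1):ℝ)^2 := by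
                rw [hbdef]
                rw [show ((2:ℝ)^(n+1))^2 = 4^(n+1) by rw [← pow_mul, mul_comm, pow_mul]; norm_num]
                rw [pow_succ]; ring
              have hsq : π^3/(2*b) = (π * Real.sqrt π / 2^(n+1))^2 := by
                rw [h2b, div_pow, mul_pow, Real.sq_sqrt pi_pos.le]
                ring_nf
              rw [hsq, Real.sqrt_sq (by positivity)]
              ring

lemma abs_Dhat_le {d : ℕ} (k : Fin d → ℝ) : |Dhat d k| ≤ 1 := by
  rcases Nat.eq_zero_or_pos d with h | h
  · subst h; simp [Dhat]
  have h1 : |∑ j, Real.cos (k j)| ≤ (d:ℝ) := by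
    calc |∑ j, Real.cos (k j)| ≤ ∑ j, |Real.cos (k j)| := Finset.abs_sum_le_sum_abs _ _
      _ ≤ ∑ _j : Fin d, (1:ℝ) := Finset.sum_le_sum fun j _ => Real.abs_cos_le_one _
      _ = d := by simp
  have hd0 : (0:ℝ) < d := Nat.cast_pos.mpr h
  rw [Dhat, abs_mul, abs_of_nonneg (by positivity : (0:ℝ) ≤ 1/(d:ℝ))]
  rw [div_mul_eq_mul_div, one_mul, div_le_one hd0]
  exact h1

/-- For every positive integer `r` there is a constant `K`, independent of `d`, such
that for all dimensions `d > 2r` the normalized integral of `(1 − D̂(k))^{−r}` over the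
torus `[−π,π]^d` is finite and at most `1 + K/d`.  (The bound is stated for the
unnormalized lower Lebesgue integral against the bound `(2π)^d (1 + K/d)`; in
particular, since the right-hand side is finite, the integral is finite.) -/
theorem simple_random_walk_integral (r : ℕ) (hr : 0 < r) :
    ∃ K : ℝ, ∀ d : ℕ, 2 * r < d →
      (∫⁻ k in Set.univ.pi (fun _ : Fin d => Set.Icc (-π) π),
          ENNReal.ofReal ((1 - Dhat d k)⁻¹ ^ r))
        ≤ ENNReal.ofReal ((2 * π) ^ d * (1 + K / d)) := by
  classical
  set C : ℝ := 7^r*((r:ℝ)+1) with hCdef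
  have hC0 : 0 ≤ C := by positivity
  refine ⟨C/2 + 2^(4*r+3), fun d hd => ?_⟩
  have hd0 : 0 < d := by omega
  have hd0' : (0:ℝ) < d := Nat.cast_pos.mpr hd0
  have hTT : Set.univ.pi (fun _ : Fin d => Set.Icc (-π) π) = TT d := rfl
  rw [hTT]
  -- basic bounds on y = 1 - Dhat
  have hy0 : ∀ k : Fin d → ℝ, 0 ≤ 1 - Dhat d k := fun k => by
    have := abs_le.mp (abs_Dhat_le k); linarith [this.2]
  have hy2 : ∀ k : Fin d → ℝ, 1 - Dhat d k ≤ 2 := fun k => by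
    have := abs_le.mp (abs_Dhat_le k); linarith [this.1]
  -- the quadratic majorant
  set G : (Fin d → ℝ) → ℝ := fun k =>
    1 + ((r:ℝ)/d) * (∑ j, Real.cos (k j)) + (C/(d:ℝ)^2) * (∑ j, Real.cos (k j))^2 with hGdef
  have hGg : ∀ k, G k = 1 - r*((1 - Dhat d k)-1) + C*((1 - Dhat d k)-1)^2 := by
    intro k
    rw [hGdef]
    simp only [Dhat]
    field_simp <;> ring
  have hGnn : ∀ k, 0 ≤ G k := fun k => (hGg k) ▸ g_nonneg r _
  have hsc : Continuous (fun k : Fin d → ℝ => ∑ j, Real.cos (k j)) :=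
    continuous_finset_sum _ fun j _ => Real.continuous_cos.comp (continuous_apply j)
  have hGcont : Continuous G :=
    (continuous_const.add (continuous_const.mul hsc)).add (continuous_const.mul (hsc.pow 2))
  -- dyadic sets
  set S : ℕ → Set (Fin d → ℝ) := fun n => {k | 1 - Dhat d k < (1/4:ℝ)^(n+1)} with hSdef
  have hSmeas : ∀ n, MeasurableSet (S n) := fun n => measurableSet_small _
  -- pointwise main split
  have hsplit : ∀ k : Fin d → ℝ, ENNReal.ofReal ((1 - Dhat d k)⁻¹ ^ r)
      ≤ ENNReal.ofReal (G k)
        + (S 0).indicator (fun k => ENNReal.ofReal ((1 - Dhat d k)⁻¹ ^ r)) k := by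
    intro k
    by_cases h : k ∈ S 0
    · rw [indicator_of_mem h]
      exact le_add_self
    · rw [indicator_of_notMem h]
      have h' : (1/4:ℝ) ≤ 1 - Dhat d k := by
        have hh : ¬ (1 - Dhat d k < (1/4:ℝ)^(0+1)) := h
        rw [zero_add, pow_one] at hh
        exact not_lt.mp hh
      rw [add_zero]
      apply ENNReal.ofReal_le_ofReal
      rw [hGg k]
      exact taylor_ineq r h' (hy2 k)
  -- pointwise dyadic bound
  have hdyadic : ∀ k : Fin d → ℝ,
      (S 0).indicator (fun k => ENNReal.ofReal ((1 - Dhat d k)⁻¹ ^ r)) k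
      ≤ ∑' n : ℕ, (S n).indicator (fun _ => ENNReal.ofReal ((4:ℝ)^(r*(n+2)))) k := by
    intro k
    by_cases h : k ∈ S 0
    · rw [indicator_of_mem h]
      set y := 1 - Dhat d k with hy
      have h1 : y < 1/4 := by
        have hh : 1 - Dhat d k < (1/4:ℝ)^(0+1) := h
        rw [zero_add, pow_one] at hh
        exact hh
      rcases eq_or_lt_of_le (hy0 k) with h0 | h0
      · have hy00 : y = 0 := hy.trans h0.symm
        rw [hy00]
        simp [zero_pow hr.ne']
      · -- find dyadic scale
        obtain ⟨N0, hN0⟩ := exists_pow_lt_of_lt_one h0 (by norm_num : (1/4:ℝ) < 1)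
        have hex : ∃ N, (1/4:ℝ)^N ≤ y := ⟨N0, hN0.le⟩
        set N := Nat.find hex with hNdef
        have hNle : (1/4:ℝ)^N ≤ y := Nat.find_spec hex
        have hN2 : 2 ≤ N := by
          by_contra hc
          interval_cases N
          · simp at hNle; linarith
          · have : ¬ ((1/4:ℝ)^1 ≤ y) := by norm_num; linarith
            exact this hNle
        obtain ⟨m, hm⟩ : ∃ m, N = m + 2 := ⟨N - 2, by omega⟩
        have hupper : ¬ ((1/4:ℝ)^(m+1) ≤ y) := Nat.find_min hex (by omega)
        have hmem : k ∈ S m := by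
          simp only [hSdef, Set.mem_setOf_eq, ← hy]
          exact not_le.mp hupper
        have hterm : ENNReal.ofReal (y⁻¹ ^ r) ≤ ENNReal.ofReal ((4:ℝ)^(r*(m+2))) := by
          apply ENNReal.ofReal_le_ofReal
          have hyinv : y⁻¹ ≤ (4:ℝ)^(m+2) := by
            rw [inv_le_comm₀ h0 (by positivity)]
            calc ((4:ℝ)^(m+2))⁻¹ = (1/4:ℝ)^(m+2) := by
                  rw [← inv_pow]; norm_num
              _ ≤ y := hm ▸ hNle
          calc y⁻¹ ^ r ≤ ((4:ℝ)^(m+2))^r := pow_le_pow_left₀ (by positivity) hyinv r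
            _ = (4:ℝ)^(r*(m+2)) := by rw [← pow_mul, mul_comm]
        calc ENNReal.ofReal (y⁻¹ ^ r) ≤ (S m).indicator
              (fun _ => ENNReal.ofReal ((4:ℝ)^(r*(m+2)))) k := by
              rw [indicator_of_mem hmem]; exact hterm
          _ ≤ ∑' n : ℕ, (S n).indicator (fun _ => ENNReal.ofReal ((4:ℝ)^(r*(n+2)))) k :=
              ENNReal.le_tsum m
    · rw [indicator_of_notMem h]
      exact zero_le
  -- Term A : the Gaussian-part integral
  have hA : ∫⁻ k in TT d, ENNReal.ofReal (G k)
      = ENNReal.ofReal ((2*π)^d * (1 + C/(2*(d:ℝ)))) := by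
    rw [← MeasureTheory.ofReal_integral_eq_lintegral_ofReal (contIntTT hGcont)
      (Filter.Eventually.of_forall fun k => hGnn k)]
    congr 1
    rw [hGdef]
    rw [intT_quad d ((r:ℝ)/d) (C/(d:ℝ)^2)]
    obtain ⟨e, rfl⟩ : ∃ e, d = e + 1 := ⟨d - 1, by omega⟩
    simp only [Nat.add_sub_cancel]
    have hde : ((e:ℝ)+1) ≠ 0 := by positivity
    push_cast
    field_simp
    ring
  -- Term B : the dyadic sum
  have hB : ∫⁻ k in TT d, (∑' n : ℕ, (S n).indicator
        (fun _ => ENNReal.ofReal ((4:ℝ)^(r*(n+2)))) k)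
      ≤ ENNReal.ofReal ((2*π)^d * (2^(4*r+3)/d)) := by
    rw [lintegral_tsum (fun n => ((measurable_const).indicator (hSmeas n)).aemeasurable)]
    set E : ℝ := Real.exp (1/2) * (π * Real.sqrt π) with hEdef
    have hE0 : 0 < E := by positivity
    have step1 : ∀ n : ℕ, ∫⁻ k in TT d, (S n).indicator
          (fun _ => ENNReal.ofReal ((4:ℝ)^(r*(n+2)))) k
        ≤ ENNReal.ofReal ((4:ℝ)^(r*(n+2))) * ENNReal.ofReal ((E/2^(n+1))^d) := by
      intro n
      rw [lintegral_indicator (hSmeas n), Measure.restrict_restrict (hSmeas n),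
        setLIntegral_const]
      exact mul_le_mul_right (smallball hd0 n) _
    calc ∑' n : ℕ, ∫⁻ k in TT d, (S n).indicator
          (fun _ => ENNReal.ofReal ((4:ℝ)^(r*(n+2)))) k
        ≤ ∑' n : ℕ, ENNReal.ofReal ((4:ℝ)^(r*(n+2))) * ENNReal.ofReal ((E/2^(n+1))^d) :=
          ENNReal.tsum_le_tsum step1
      _ = ∑' n : ℕ, ENNReal.ofReal ((4:ℝ)^(2*r) * (E/2)^d) * (ENNReal.ofReal ((4:ℝ)^r/2^d))^n := by
          apply tsum_congr
          intro n
          rw [← ENNReal.ofReal_pow (by positivity), ← ENNReal.ofReal_mul (by positivity),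
            ← ENNReal.ofReal_mul (by positivity)]
          congr 1
          rw [div_pow, div_pow, div_pow]
          rw [show ((2:ℝ)^(n+1))^d = 2^d * ((2:ℝ)^d)^n by
            rw [← pow_mul, ← pow_mul, ← pow_add]; ring_nf]
          rw [show ((4:ℝ)^r)^n = 4^(r*n) by rw [← pow_mul, mul_comm]]
          rw [show ((4:ℝ))^(r*(n+2)) = 4^(r*n) * 4^(2*r) by rw [← pow_add]; ring_nf]
          have h2d : ((2:ℝ)^d)^n ≠ 0 := by positivity
          field_simp
      _ = ENNReal.ofReal ((4:ℝ)^(2*r) * (E/2)^d) * ∑' n : ℕ, (ENNReal.ofReal ((4:ℝ)^r/2^d))^n :=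
          ENNReal.tsum_mul_left
      _ ≤ ENNReal.ofReal ((4:ℝ)^(2*r) * (E/2)^d) * 2 := by
          apply mul_le_mul_right
          rw [ENNReal.tsum_geometric]
          have hρ : ENNReal.ofReal ((4:ℝ)^r/2^d) ≤ 2⁻¹ := by
            rw [show ((2:ℝ≥0∞))⁻¹ = ENNReal.ofReal (2⁻¹) by
              rw [ENNReal.ofReal_inv_of_pos (by norm_num)]; norm_num]
            apply ENNReal.ofReal_le_ofReal
            rw [div_le_iff₀ (by positivity)]
            calc (4:ℝ)^r = 2^(2*r) := by
                  rw [show (4:ℝ) = 2^2 by norm_num, ← pow_mul]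
              _ = 2⁻¹ * 2^(2*r+1) := by rw [pow_succ]; ring
              _ ≤ 2⁻¹ * 2^d := by
                  have : (2:ℝ)^(2*r+1) ≤ 2^d := pow_le_pow_right₀ (by norm_num) (by omega)
                  nlinarith
          calc (1 - ENNReal.ofReal ((4:ℝ)^r/2^d))⁻¹ ≤ (1 - 2⁻¹)⁻¹ :=
                ENNReal.inv_le_inv.mpr (tsub_le_tsub_left hρ 1)
            _ = 2 := by rw [ENNReal.one_sub_inv_two, inv_inv]
      _ ≤ ENNReal.ofReal ((2*π)^d * (2^(4*r+3)/d)) := by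
          rw [show (2:ℝ≥0∞) = ENNReal.ofReal 2 by norm_num,
            ← ENNReal.ofReal_mul (by positivity)]
          apply ENNReal.ofReal_le_ofReal
          -- numeric estimate
          have hsqrtpi : (0:ℝ) < Real.sqrt π := Real.sqrt_pos.mpr pi_pos
          have hq3 : E/(4*π) ≤ 3/4 := by
            have hsq : (Real.exp (1/2) * Real.sqrt π)^2 = Real.exp 1 * π := by
              rw [mul_pow, Real.sq_sqrt pi_pos.le, sq, ← Real.exp_add]
              norm_num
            have h9 : (Real.exp (1/2) * Real.sqrt π)^2 ≤ 9 := by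
              rw [hsq]
              nlinarith [Real.exp_one_lt_d9, Real.pi_lt_d2, Real.exp_pos 1, pi_pos]
            have h3 : Real.exp (1/2) * Real.sqrt π ≤ 3 := by
              nlinarith [sq_nonneg (Real.exp (1/2) * Real.sqrt π - 3)]
            rw [hEdef, div_le_div_iff₀ (by positivity) (by norm_num)]
            nlinarith [pi_pos]
          have hqnn : (0:ℝ) ≤ E/(4*π) := by positivity
          have hEpow : (E/2)^d = (2*π)^d * (E/(4*π))^d := by
            rw [← mul_pow]
            congr 1
            field_simp
            ring
          have h34 : ((3:ℝ)/4)^d ≤ 3/(d:ℝ) := by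
            have hber : 1 + (d:ℝ) * (1/3) ≤ (1 + 1/3)^d :=
              one_add_mul_le_pow (by norm_num) d
            have hprod : ((3:ℝ)/4)^d * ((1:ℝ) + 1/3)^d = 1 := by
              rw [← mul_pow]
              norm_num
            have hp1 : (0:ℝ) < ((1:ℝ) + 1/3)^d := by positivity
            have hp2 : (0:ℝ) ≤ ((3:ℝ)/4)^d := by positivity
            rw [le_div_iff₀ hd0']
            nlinarith [mul_le_mul_of_nonneg_left hber hp2]
          have hqd : (E/(4*π))^d ≤ 3/(d:ℝ) :=
            le_trans (pow_le_pow_left₀ hqnn hq3 d) h34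
          have h2pnn : (0:ℝ) ≤ (2*π)^d := by positivity
          have h163 : (2:ℝ)^(4*r+3) = 8 * 4^(2*r) := by
            rw [show (4:ℝ)^(2*r) = 2^(4*r) by
              rw [show (4:ℝ) = 2^2 by norm_num, ← pow_mul]; ring_nf]
            rw [pow_add]
            ring
          calc (4:ℝ)^(2*r) * (E/2)^d * 2 = (2*π)^d * (2 * 4^(2*r) * (E/(4*π))^d) := by
                rw [hEpow]; ring
            _ ≤ (2*π)^d * (2 * 4^(2*r) * (3/(d:ℝ))) := by
                apply mul_le_mul_of_nonneg_left _ h2pnn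
                exact mul_le_mul_of_nonneg_left hqd (by positivity)
            _ ≤ (2*π)^d * (2^(4*r+3)/d) := by
                apply mul_le_mul_of_nonneg_left _ h2pnn
                rw [h163, show (2:ℝ) * 4^(2*r) * (3/(d:ℝ)) = 6 * 4^(2*r) / d by ring]
                gcongr <;> norm_num
  -- assemble
  calc ∫⁻ k in TT d, ENNReal.ofReal ((1 - Dhat d k)⁻¹ ^ r)
      ≤ ∫⁻ k in TT d, (ENNReal.ofReal (G k)
          + (S 0).indicator (fun k => ENNReal.ofReal ((1 - Dhat d k)⁻¹ ^ r)) k) :=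
        lintegral_mono hsplit
    _ = (∫⁻ k in TT d, ENNReal.ofReal (G k))
        + ∫⁻ k in TT d, (S 0).indicator (fun k => ENNReal.ofReal ((1 - Dhat d k)⁻¹ ^ r)) k :=
        lintegral_add_left (hGcont.measurable.ennreal_ofReal) _
    _ ≤ ENNReal.ofReal ((2*π)^d * (1 + C/(2*(d:ℝ))))
        + ENNReal.ofReal ((2*π)^d * (2^(4*r+3)/d)) := by
        apply add_le_add
        · exact hA.le
        · exact le_trans (lintegral_mono hdyadic) hB
    _ ≤ ENNReal.ofReal ((2 * π) ^ d * (1 + (C/2 + 2^(4*r+3)) / d)) := by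
        rw [← ENNReal.ofReal_add (by positivity) (by positivity)]
        apply ENNReal.ofReal_le_ofReal
        rw [show (2*π)^d * (1 + C/(2*(d:ℝ))) + (2*π)^d * (2^(4*r+3)/d)
            = (2*π)^d * (1 + (C/2 + 2^(4*r+3)) / d) by field_simp; ring]

end
end

section
/- Last-exit characterization of loop erasure: let ω be a walk on ℤ^d. Define ℓ_0 = 0 and, inductively, ℓ_k = sup{ j : ω_j = ω_{ℓ_{k−1}} } + 1 for k ≥ 1 (with ℓ_k = −∞ once the supremum is over the empty set). Suppose there are exactly n+1 indices k with ℓ_k finite and ℓ_k ≤ |ω|, namely ℓ_0, ℓ_1, …, ℓ_n. Then the loop erasure of ω is LE(ω) = (ω_{ℓ_0}, ω_{ℓ_1}, …, ω_{ℓ_n}). -/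
open scoped ENNReal NNReal BigOperators Classical

noncomputable section

namespace LWW

/-- A point of the lattice ℤ^d. -/
abbrev Pt (d : ℕ) := Fin d → ℤ

/-- ℓ¹ distance on ℤ^d. -/
def dist1 {d : ℕ} (x y : Pt d) : ℕ := ∑ i, (x i - y i).natAbs

/-- Nearest-neighbour adjacency on ℤ^d. -/
def Adj {d : ℕ} (x y : Pt d) : Prop := dist1 x y = 1

/-- Auxiliary function for single loop erasure: scan the list, keeping the
self-avoiding prefix `pre`; when the first repeated vertex is met, return the
loop-erased list together with the removed loop. -/
def le1Aux {α : Type*} [DecidableEq α] : List α → List α → List α × Option (List α)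
  | pre, [] => (pre, none)
  | pre, x :: rest =>
    if x ∈ pre then
      (pre.takeWhile (fun y => y ≠ x) ++ x :: rest,
        some (pre.dropWhile (fun y => y ≠ x) ++ [x]))
    else le1Aux (pre ++ [x]) rest

/-- Single loop erasure LE¹. -/
def LE1 {α : Type*} [DecidableEq α] (l : List α) : List α := (le1Aux [] l).1

/-- The loop removed by a single loop erasure (if the list is not self-avoiding). -/
def removedLoop {α : Type*} [DecidableEq α] (l : List α) : Option (List α) := (le1Aux [] l).2

/-- Iterate single loop erasure (with fuel), collecting the multiset of removed loops. -/
def leAux {α : Type*} [DecidableEq α] : ℕ → List α → List α × Multiset (List α)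
  | 0, l => (l, 0)
  | n + 1, l =>
    match le1Aux ([] : List α) l with
    | (_, none) => (l, 0)
    | (l', some c) => ((leAux n l').1, c ::ₘ (leAux n l').2)

/-- Loop erasure LE. -/
def LE {α : Type*} [DecidableEq α] (l : List α) : List α := (leAux l.length l).1

/-- The multiset of loops removed by loop erasure. -/
def erasedLoops {α : Type*} [DecidableEq α] (l : List α) : Multiset (List α) :=
  (leAux l.length l).2

/-- The number of loops removed by loop erasure. -/
def nLoops {α : Type*} [DecidableEq α] (l : List α) : ℕ := Multiset.card (erasedLoops l)

/-- A (finite) nearest-neighbour walk on ℤ^d, recorded as its (nonempty) list of vertices. -/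
structure Walk (d : ℕ) where
  pts : List (Pt d)
  ne : pts ≠ []
  chain : pts.Chain' Adj

namespace Walk

variable {d : ℕ}

/-- The number of steps of a walk. -/
def len (ω : Walk d) : ℕ := ω.pts.length - 1

/-- The initial vertex of a walk. -/
def start (ω : Walk d) : Pt d := ω.pts.headI

/-- The final vertex of a walk. -/
def finish (ω : Walk d) : Pt d := ω.pts.getLastD default

/-- The range (set of visited vertices) of a walk. -/
def range (ω : Walk d) : Set (Pt d) := {x | x ∈ ω.pts}

/-- The `i`-th vertex of a walk. -/
def nth (ω : Walk d) (i : ℕ) : Pt d := ω.pts.getD i default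

/-- A walk is a loop if it has at least one step and ends where it began. -/
def IsLoop (ω : Walk d) : Prop := 1 ≤ ω.len ∧ ω.finish = ω.start

end Walk

/-- The list of vertices of a self-avoiding polygon: a closed nearest-neighbour
walk all of whose vertices are distinct except that the last equals the first. -/
def IsSAPList {d : ℕ} (l : List (Pt d)) : Prop :=
  l.Chain' Adj ∧ 3 ≤ l.length ∧ l.getLastD default = l.headI ∧ l.dropLast.Nodup

/-- Change the initial vertex of a polygon list by a cyclic rotation. -/
def polyRot {d : ℕ} (l : List (Pt d)) (r : ℕ) : List (Pt d) :=
  l.dropLast.rotate r ++ [(l.dropLast.rotate r).headI]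

/-- An isometry of the lattice ℤ^d: a bijection preserving ℓ¹ distance. -/
def IsLatticeIso {d : ℕ} (R : Pt d ≃ Pt d) : Prop :=
  ∀ x y : Pt d, dist1 (R x) (R y) = dist1 x y

/-- The symmetry assumption on the loop activities: invariance under isometries of ℤ^d
and under change of initial vertex and of orientation of the polygon. -/
def SymmAssumption {d : ℕ} (lam : List (Pt d) → ℝ≥0) : Prop :=
  (∀ R : Pt d ≃ Pt d, IsLatticeIso R → ∀ l : List (Pt d), IsSAPList l →
      lam (l.map R) = lam l) ∧
  (∀ l : List (Pt d), IsSAPList l → ∀ r : ℕ, lam (polyRot l r) = lam l) ∧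
  (∀ l : List (Pt d), IsSAPList l → lam l.reverse = lam l)

/-- The boundedness assumption: sup over self-avoiding polygons of the activity is finite. -/
def BoundedAssumption {d : ℕ} (lam : List (Pt d) → ℝ≥0) : Prop :=
  ∃ M : ℝ≥0, ∀ l : List (Pt d), IsSAPList l → lam l ≤ M

/-- The product of the loop activities over the loops erased from `ω`, i.e. λ^{n_L(ω)}. -/
def wt0 {d : ℕ} (lam : List (Pt d) → ℝ≥0) (ω : Walk d) : ℝ≥0∞ :=
  ((erasedLoops ω.pts).map (fun η => (lam η : ℝ≥0∞))).prod

/-- The λ-LWW weight w_{λ,z}(ω) = z^{|ω|} λ^{n_L(ω)}. -/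
def wt {d : ℕ} (lam : List (Pt d) → ℝ≥0) (z : ℝ≥0) (ω : Walk d) : ℝ≥0∞ :=
  (z : ℝ≥0∞) ^ ω.len * wt0 lam ω

/-- The λ-LWW two-point function. -/
def G {d : ℕ} (lam : List (Pt d) → ℝ≥0) (z : ℝ≥0) (x y : Pt d) : ℝ≥0∞ :=
  ∑' ω : Walk d, if ω.start = x ∧ ω.finish = y then wt lam z ω else 0

/-- The λ-LWW loop measure μ_{λ,z}(A;B). -/
def mu {d : ℕ} (lam : List (Pt d) → ℝ≥0) (z : ℝ≥0) (A B : Set (Pt d)) : ℝ≥0∞ :=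
  ∑' ω : Walk d,
    if ω.IsLoop ∧ (ω.range ∩ A).Nonempty ∧ ω.range ∩ B = ∅
    then wt lam z ω / (ω.len : ℝ≥0∞) else 0

/-- The generalized λ-LWW loop measure μ_{λ,z}(A,B;C) with two hitting sets. -/
def mu2 {d : ℕ} (lam : List (Pt d) → ℝ≥0) (z : ℝ≥0) (A B C : Set (Pt d)) : ℝ≥0∞ :=
  ∑' ω : Walk d,
    if ω.IsLoop ∧ (ω.range ∩ A).Nonempty ∧ (ω.range ∩ B).Nonempty ∧ ω.range ∩ C = ∅
    then wt lam z ω / (ω.len : ℝ≥0∞) else 0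

/-- exp : [0,∞] → [0,∞] with exp(∞) = ∞. -/
def eexp (x : ℝ≥0∞) : ℝ≥0∞ := if x = ⊤ then ⊤ else ENNReal.ofReal (Real.exp x.toReal)

/-- The loop-erased λ-LWW weight w̄_{λ,z}(η) of a self-avoiding walk η. -/
def wbar {d : ℕ} (lam : List (Pt d) → ℝ≥0) (z : ℝ≥0) (η : Walk d) : ℝ≥0∞ :=
  ∑' ω : Walk d, if LE ω.pts = η.pts then wt lam z ω else 0

/-- c_n^λ : the total λ-LWW mass of n-step walks started at the origin. -/
def cN {d : ℕ} (lam : List (Pt d) → ℝ≥0) (n : ℕ) : ℝ≥0∞ :=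
  ∑' ω : Walk d, if ω.start = 0 ∧ ω.len = n then wt0 lam ω else 0

/-- The susceptibility χ_λ(z) = Σ_n c_n^λ z^n. -/
def chi {d : ℕ} (lam : List (Pt d) → ℝ≥0) (z : ℝ) : ℝ≥0∞ :=
  ∑' n : ℕ, cN lam n * ENNReal.ofReal z ^ n

/-- The critical point z_c(λ): the radius of convergence of the susceptibility
(for a power series with nonnegative coefficients this is the supremum of the
set of nonnegative z at which the series converges). -/
def zc {d : ℕ} (lam : List (Pt d) → ℝ≥0) : ℝ :=
  sSup {z : ℝ | 0 ≤ z ∧ chi lam z < ⊤}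


/-- The last-exit times of a walk: `ℓ_0 = 0` and
`ℓ_k = sup{ j : ω_j = ω_{ℓ_{k−1}} } + 1`, with value `none` (i.e. `−∞`) once the
supremum is over the empty set (in particular once `ℓ_{k−1}` is not a valid index). -/
def lexit {d : ℕ} (ω : Walk d) : ℕ → Option ℕ
  | 0 => some 0
  | k + 1 =>
    match lexit ω k with
    | none => none
    | some m =>
      if hs : ((Finset.range (ω.len + 1)).filter
          (fun j => m ≤ ω.len ∧ ω.nth j = ω.nth m)).Nonempty
      then some (((Finset.range (ω.len + 1)).filter
          (fun j => m ≤ ω.len ∧ ω.nth j = ω.nth m)).max' hs + 1)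
      else none

/-! ### Auxiliary development for the last-exit characterization -/

section AfterLast
variable {α : Type*} [DecidableEq α]

/-- The suffix of `l` strictly after the last occurrence of `x` (all of `l` if `x ∉ l`). -/
def afterLast (x : α) (l : List α) : List α := (l.reverse.takeWhile (fun y => y ≠ x)).reverse

lemma length_afterLast_le (x : α) (l : List α) : (afterLast x l).length ≤ l.length := by
  have := (List.takeWhile_sublist (l := l.reverse) (fun y => decide (y ≠ x))).length_le
  simpa [afterLast] using this

lemma afterLast_of_not_mem {x : α} {l : List α} (h : x ∉ l) : afterLast x l = l := by
  have : l.reverse.takeWhile (fun y => decide (y ≠ x)) = l.reverse := by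
    rw [List.takeWhile_eq_self_iff]
    intro a ha
    simp only [decide_eq_true_iff]
    rintro rfl; exact h (List.mem_reverse.mp ha)
  simp only [afterLast]
  rw [this, List.reverse_reverse]

lemma takeWhile_append_stop {p : α → Bool} {l : List α} (h : ∃ a ∈ l, ¬ p a) (r : List α) :
    (l ++ r).takeWhile p = l.takeWhile p := by
  induction l with
  | nil => simp at h
  | cons a t ih =>
    by_cases hpa : p a = true
    · have h' : ∃ b ∈ t, ¬ p b := by
        obtain ⟨b, hb, hpb⟩ := h
        rcases List.mem_cons.mp hb with rfl | hb
        · exact absurd hpa hpb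
        · exact ⟨b, hb, hpb⟩
      simp [List.takeWhile_cons, hpa, ih h']
    · simp [List.takeWhile_cons, hpa]

lemma afterLast_append_of_mem {x : α} {r : List α} (h : x ∈ r) (l : List α) :
    afterLast x (l ++ r) = afterLast x r := by
  simp only [afterLast, List.reverse_append]
  rw [takeWhile_append_stop ⟨x, List.mem_reverse.mpr h, by simp⟩]

lemma afterLast_cons_self (x : α) (l : List α) : afterLast x (x :: l) = afterLast x l := by
  by_cases hx : x ∈ l
  · simp only [afterLast, List.reverse_cons]
    rw [takeWhile_append_stop ⟨x, List.mem_reverse.mpr hx, by simp⟩]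
  · rw [afterLast_of_not_mem hx]
    simp only [afterLast, List.reverse_cons]
    rw [List.takeWhile_append_of_pos, List.takeWhile_cons]
    · simp
    · intro a ha
      simp only [decide_eq_true_iff]
      rintro rfl; exact hx (List.mem_reverse.mp ha)

/-- Last-exit loop erasure. -/
def lexList : List α → List α
  | [] => []
  | x :: t => x :: lexList (afterLast x t)
  termination_by l => l.length
  decreasing_by simp only [List.length_cons]; exact Nat.lt_succ_of_le (length_afterLast_le x t)

lemma lexList_nil : lexList ([] : List α) = [] := by rw [lexList]

lemma lexList_cons (x : α) (t : List α) :
    lexList (x :: t) = x :: lexList (afterLast x t) := by rw [lexList]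

lemma lexList_of_nodup : ∀ {l : List α}, l.Nodup → lexList l = l
  | [], _ => lexList_nil
  | x :: t, h => by
    rw [lexList_cons, afterLast_of_not_mem (List.nodup_cons.mp h).1,
      lexList_of_nodup (List.nodup_cons.mp h).2]

lemma lexList_erase_loop : ∀ (P : List α) (x : α) (Q R : List α), (P ++ x :: Q).Nodup →
    lexList (P ++ x :: (Q ++ x :: R)) = lexList (P ++ x :: R)
  | [], x, Q, R, _ => by
    rw [List.nil_append, List.nil_append, lexList_cons, lexList_cons,
      afterLast_append_of_mem (List.mem_cons_self : x ∈ x :: R) Q, afterLast_cons_self]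
  | y :: P, x, Q, R, h => by
    have hy : y ∉ P ++ x :: Q := (List.nodup_cons.mp h).1
    have hyP : y ∉ P := fun h' => hy (by simp [h'])
    have hyx : y ≠ x := fun h' => hy (by simp [h'])
    have hyQ : y ∉ Q := fun h' => hy (by simp [h'])
    simp only [List.cons_append]
    rw [lexList_cons, lexList_cons]
    by_cases hyR : y ∈ R
    · rw [show P ++ x :: (Q ++ x :: R) = (P ++ x :: Q ++ [x]) ++ R by simp,
        afterLast_append_of_mem hyR, show P ++ x :: R = (P ++ [x]) ++ R by simp,
        afterLast_append_of_mem hyR]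
    · have h1 : y ∉ P ++ x :: (Q ++ x :: R) := by
        simp only [List.mem_append, List.mem_cons, not_or]
        tauto
      have h2 : y ∉ P ++ x :: R := by
        simp only [List.mem_append, List.mem_cons, not_or]
        tauto
      rw [afterLast_of_not_mem h1, afterLast_of_not_mem h2,
        lexList_erase_loop P x Q R (List.nodup_cons.mp h).2]

lemma takeWhile_dropWhile_of_mem {x : α} : ∀ {pre : List α}, x ∈ pre →
    ∃ P Q : List α, pre = P ++ x :: Q ∧ pre.takeWhile (fun y => y ≠ x) = P ∧
      pre.dropWhile (fun y => y ≠ x) = x :: Q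
  | a :: t, h => by
    by_cases hax : a = x
    · subst hax
      refine ⟨[], t, rfl, ?_, ?_⟩
      · rw [List.takeWhile_cons, if_neg (by simp)]
      · rw [List.dropWhile_cons, if_neg (by simp)]
    · have hxt : x ∈ t := by
        rcases List.mem_cons.mp h with h' | h'
        · exact absurd h'.symm hax
        · exact h'
      obtain ⟨P, Q, e1, e2, e3⟩ := takeWhile_dropWhile_of_mem hxt
      refine ⟨a :: P, Q, by rw [List.cons_append, e1], ?_, ?_⟩
      · rw [List.takeWhile_cons, if_pos (by simp [hax]), e2]
      · rw [List.dropWhile_cons, if_pos (by simp [hax]), e3]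

lemma le1Aux_spec : ∀ (l pre : List α), pre.Nodup →
    (le1Aux pre l = (pre ++ l, none) ∧ (pre ++ l).Nodup) ∨
    (∃ P x Q R c, pre ++ l = P ++ x :: (Q ++ x :: R) ∧ (P ++ x :: Q).Nodup ∧
      le1Aux pre l = (P ++ x :: R, some c))
  | [], pre, h => Or.inl ⟨by rw [le1Aux, List.append_nil], by simpa using h⟩
  | x :: rest, pre, h => by
    by_cases hx : x ∈ pre
    · obtain ⟨P, Q, e1, e2, e3⟩ := takeWhile_dropWhile_of_mem hx
      right
      refine ⟨P, x, Q, rest, (x :: Q) ++ [x], ?_, ?_, ?_⟩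
      · rw [e1]; simp
      · rw [← e1]; exact h
      · rw [le1Aux, if_pos hx, e2, e3]
    · have h' : (pre ++ [x]).Nodup := by
        rw [List.nodup_append]
        exact ⟨h, List.nodup_singleton x, by simp; intro a ha hax; exact hx (hax ▸ ha)⟩
      have key := le1Aux_spec rest (pre ++ [x]) h'
      have heq : pre ++ [x] ++ rest = pre ++ x :: rest := by simp
      rw [heq] at key
      rw [le1Aux, if_neg hx]
      exact key

lemma leAux_spec : ∀ (fuel : ℕ) (l : List α), l.length ≤ fuel →
    (leAux fuel l).1.Nodup ∧ lexList (leAux fuel l).1 = lexList l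
  | 0, l, h => by
    have hl : l = [] := List.length_eq_zero_iff.mp (Nat.le_zero.mp h)
    subst hl
    exact ⟨List.nodup_nil, rfl⟩
  | fuel + 1, l, h => by
    rcases le1Aux_spec l [] List.nodup_nil with ⟨e1, e2⟩ | ⟨P, x, Q, R, c, e1, e2, e3⟩
    · rw [List.nil_append] at e1 e2
      have hred : leAux (fuel + 1) l = (l, 0) := by simp only [leAux, e1]
      rw [hred]
      exact ⟨e2, rfl⟩
    · rw [List.nil_append] at e1
      have hlen : (P ++ x :: R).length ≤ fuel := by
        have h1 : l.length = P.length + (Q.length + (R.length + 2)) := by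
          rw [e1]; simp; omega
        have h2 : (P ++ x :: R).length = P.length + (R.length + 1) := by simp
        omega
      obtain ⟨n1, n2⟩ := leAux_spec fuel (P ++ x :: R) hlen
      have hred : (leAux (fuel + 1) l).1 = (leAux fuel (P ++ x :: R)).1 := by
        simp only [leAux, e3]
      rw [hred]
      refine ⟨n1, ?_⟩
      rw [n2, e1, lexList_erase_loop P x Q R e2]

lemma LE_eq_lexList (l : List α) : LE l = lexList l := by
  obtain ⟨h1, h2⟩ := leAux_spec l.length l le_rfl
  rw [LE, ← lexList_of_nodup h1, h2]

end AfterLast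

lemma Walk.length_pts {d : ℕ} (ω : Walk d) : ω.pts.length = ω.len + 1 := by
  have h := List.length_pos_iff.mpr ω.ne
  simp only [Walk.len]
  omega

lemma lexit_step {d : ℕ} (ω : Walk d) {k m : ℕ} (hk : lexit ω k = some m) (hm : m ≤ ω.len) :
    ∃ m', lexit ω (k + 1) = some m' ∧ m < m' ∧ m' ≤ ω.len + 1 ∧
      afterLast (ω.nth m) (ω.pts.drop (m + 1)) = ω.pts.drop m' := by
  have hmF : m ∈ (Finset.range (ω.len + 1)).filter
      (fun j => m ≤ ω.len ∧ ω.nth j = ω.nth m) := by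
    rw [Finset.mem_filter, Finset.mem_range]
    exact ⟨by omega, hm, rfl⟩
  have hne : ((Finset.range (ω.len + 1)).filter
      (fun j => m ≤ ω.len ∧ ω.nth j = ω.nth m)).Nonempty := ⟨m, hmF⟩
  set j := ((Finset.range (ω.len + 1)).filter
      (fun j => m ≤ ω.len ∧ ω.nth j = ω.nth m)).max' hne with hj
  have hjF := Finset.max'_mem _ hne
  rw [← hj, Finset.mem_filter, Finset.mem_range] at hjF
  obtain ⟨hjlt, -, hjval⟩ := hjF
  have hmj : m ≤ j := Finset.le_max' _ m hmF
  have hlexit : lexit ω (k + 1) = some (j + 1) := by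
    simp only [lexit, hk, dif_pos hne]; rfl
  have hlength := ω.length_pts
  have hnotmem : ω.nth m ∉ ω.pts.drop (j + 1) := by
    intro hmem'
    obtain ⟨i, hi, hval⟩ := List.mem_iff_getElem.mp hmem'
    rw [List.getElem_drop] at hval
    have hidx : j + 1 + i < ω.pts.length := by
      rw [List.length_drop] at hi; omega
    have hmemF : (j + 1 + i) ∈ (Finset.range (ω.len + 1)).filter
        (fun j => m ≤ ω.len ∧ ω.nth j = ω.nth m) := by
      rw [Finset.mem_filter, Finset.mem_range]
      refine ⟨by omega, hm, ?_⟩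
      rw [Walk.nth, List.getD_eq_getElem _ _ hidx, hval]
    have := Finset.le_max' _ _ hmemF
    omega
  refine ⟨j + 1, hlexit, by omega, by omega, ?_⟩
  by_cases hjm : j = m
  · rw [hjm]
    exact afterLast_of_not_mem (by rwa [hjm] at hnotmem)
  · have hmj' : m + 1 ≤ j := by omega
    have hdecomp : ω.pts.drop (m + 1) =
        (ω.pts.drop (m + 1)).take (j - (m + 1)) ++ (ω.nth m :: ω.pts.drop (j + 1)) := by
      conv_lhs => rw [← List.take_append_drop (j - (m + 1)) (ω.pts.drop (m + 1))]
      congr 1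
      rw [List.drop_drop]
      have harith : m + 1 + (j - (m + 1)) = j := by omega
      rw [harith, List.drop_eq_getElem_cons (by omega : j < ω.pts.length)]
      congr 1
      exact (List.getD_eq_getElem ω.pts default
        (by omega : j < ω.pts.length)).symm.trans hjval
    rw [hdecomp, afterLast_append_of_mem List.mem_cons_self,
      afterLast_cons_self, afterLast_of_not_mem hnotmem]


lemma lex_drop_eq {d : ℕ} (ω : Walk d) (n : ℕ)
    (h₁ : ∀ k ≤ n, ∃ m : ℕ, lexit ω k = some m ∧ m ≤ ω.len)
    (h₂ : ∀ k m : ℕ, lexit ω k = some m → m ≤ ω.len → k ≤ n) :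
    ∀ i k m : ℕ, k + i = n → lexit ω k = some m → m ≤ ω.len →
      lexList (ω.pts.drop m) =
        (List.range' k (i + 1)).map (fun j => ω.nth ((lexit ω j).getD 0)) := by
  intro i
  induction i with
  | zero =>
    intro k m hkn hlex hm
    obtain ⟨m', hm'1, hm'2, hm'3, hafter⟩ := lexit_step ω hlex hm
    have hnle : ¬ m' ≤ ω.len := fun hle => by
      have := h₂ (k + 1) m' hm'1 hle; omega
    have hm'eq : m' = ω.len + 1 := by omega
    have hlength := ω.length_pts
    have hdrop : ω.pts.drop m' = [] := by
      rw [List.drop_eq_nil_iff]; omega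
    have hm_lt : m < ω.pts.length := by omega
    have hnth : ω.pts[m] = ω.nth m :=
      (List.getD_eq_getElem _ _ hm_lt).symm
    rw [List.drop_eq_getElem_cons hm_lt, lexList_cons, hnth, hafter, hdrop, lexList_nil]
    have hk : k = n := by omega
    simp [List.range'_one, hlex]
  | succ i ih =>
    intro k m hkn hlex hm
    obtain ⟨m', hm'1, hm'2, hm'3, hafter⟩ := lexit_step ω hlex hm
    obtain ⟨m'', hm''1, hm''2⟩ := h₁ (k + 1) (by omega)
    have hm'm'' : m' = m'' := by
      rw [hm'1] at hm''1; exact Option.some.inj hm''1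
    subst hm'm''
    have hrec := ih (k + 1) m' (by omega) hm'1 hm''2
    have hlength := ω.length_pts
    have hm_lt : m < ω.pts.length := by omega
    have hnth : ω.pts[m] = ω.nth m :=
      (List.getD_eq_getElem _ _ hm_lt).symm
    rw [List.drop_eq_getElem_cons hm_lt, lexList_cons, hnth, hafter, hrec,
      show List.range' k (i + 1 + 1) = k :: List.range' (k + 1) (i + 1) from
        List.range'_succ]
    simp [hlex]

theorem loop_erasure_last_exit' {d : ℕ} (ω : Walk d) (n : ℕ)
    (h₁ : ∀ k ≤ n, ∃ m : ℕ, lexit ω k = some m ∧ m ≤ ω.len)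
    (h₂ : ∀ k m : ℕ, lexit ω k = some m → m ≤ ω.len → k ≤ n) :
    LE ω.pts = (List.range (n + 1)).map (fun k => ω.nth ((lexit ω k).getD 0)) := by
  have h0 : lexit ω 0 = some 0 := rfl
  have key := lex_drop_eq ω n h₁ h₂ n 0 0 (by omega) h0 (Nat.zero_le _)
  rw [List.drop_zero] at key
  rw [LE_eq_lexList, key, List.range_eq_range']

/-- **Last-exit characterization of loop erasure.**  Let `ω` be a walk on ℤ^d and let
`ℓ_k` be its last-exit times.  If there are exactly `n+1` indices `k` with `ℓ_k`
finite and `ℓ_k ≤ |ω|` (namely `k = 0, 1, …, n`), then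
`LE(ω) = (ω_{ℓ_0}, ω_{ℓ_1}, …, ω_{ℓ_n})`. -/
theorem loop_erasure_last_exit {d : ℕ} (ω : Walk d) (n : ℕ)
    (h₁ : ∀ k ≤ n, ∃ m : ℕ, lexit ω k = some m ∧ m ≤ ω.len)
    (h₂ : ∀ k m : ℕ, lexit ω k = some m → m ≤ ω.len → k ≤ n) :
    LE ω.pts = (List.range (n + 1)).map (fun k => ω.nth ((lexit ω k).getD 0)) :=
  loop_erasure_last_exit' ω n h₁ h₂

end LWW
end
end

section
/- Returns identity for closed λ-LWW: let λ = (λ_η) be nonnegative loop activities, z ≥ 0, and x ∈ ℤ^d. Let α₀(λ,z) = Σ_{walks ω from x to x} w_{λ,z}(ω) (including the zero-step walk), and assume α₀(λ,z) < ∞. Then Σ_{walks ω from x to x with |ω| ≥ 1} #{ j ∈ {1,…,|ω|} : ω_j = x }·w_{λ,z}(ω) = α₀(λ,z)·(α₀(λ,z) − 1). -/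
open scoped ENNReal NNReal BigOperators Classical

noncomputable section

namespace LWW

/-- `α₀(λ,z)` based at `x`: the total λ-LWW weight of closed walks at `x`
(including the zero-step walk). -/
def alpha0At {d : ℕ} (lam : List (Pt d) → ℝ≥0) (z : ℝ≥0) (x : Pt d) : ℝ≥0∞ :=
  ∑' ω : Walk d, if ω.start = x ∧ ω.finish = x then wt lam z ω else 0

/-! ### Auxiliary lemmas for the proof of the returns identity -/

section LoopErasureLemmas

variable {dd : ℕ}

lemma le1Aux_none_eq {pre l p : List (Pt dd)} (h : le1Aux pre l = (p, none)) : p = pre ++ l := by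
  induction l generalizing pre with
  | nil =>
    simp only [le1Aux, Prod.mk.injEq] at h
    simp [← h.1]
  | cons a rest ih =>
    rw [le1Aux] at h
    by_cases ha : a ∈ pre
    · simp [ha] at h
    · rw [if_neg ha] at h
      rw [ih h, List.append_assoc, List.singleton_append]

lemma le1Aux_none_nodup {pre l p : List (Pt dd)} (hpre : pre.Nodup) (h : le1Aux pre l = (p, none)) :
    (pre ++ l).Nodup := by
  induction l generalizing pre with
  | nil => simpa using hpre
  | cons a rest ih =>
    rw [le1Aux] at h
    by_cases ha : a ∈ pre
    · simp [ha] at h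
    · rw [if_neg ha] at h
      have h2 : (pre ++ [a]).Nodup := by
        simp [List.nodup_append, hpre, ha]
        exact fun b hb hba => ha (hba ▸ hb)
      have := ih h2 h
      simpa [List.append_assoc] using this

lemma le1Aux_some_spec {pre l p c : List (Pt dd)} (h : le1Aux pre l = (p, some c)) :
    p.head? = (pre ++ l).head? ∧ p.getLast? = (pre ++ l).getLast? ∧
      p.length < pre.length + l.length := by
  induction l generalizing pre with
  | nil => simp [le1Aux] at h
  | cons a rest ih =>
    rw [le1Aux] at h
    by_cases ha : a ∈ pre
    · rw [if_pos ha] at h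
      simp only [Prod.mk.injEq, Option.some.injEq] at h
      obtain ⟨h1, h2⟩ := h
      have htd : pre.takeWhile (fun y => y ≠ a) ++ pre.dropWhile (fun y => y ≠ a) = pre :=
        List.takeWhile_append_dropWhile
      have hdW : pre.dropWhile (fun y => y ≠ a) ≠ [] := by
        intro hnil
        rw [List.dropWhile_eq_nil_iff] at hnil
        have := hnil a ha
        simp at this
      refine ⟨?_, ?_, ?_⟩
      · rw [← h1]
        cases pre with
        | nil => exact absurd ha (by simp)
        | cons b pre' =>
          by_cases hb : b = a
          · subst hb
            rw [List.takeWhile_cons_of_neg (by simp)]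
            simp
          · rw [List.takeWhile_cons_of_pos (by simpa using hb)]
            simp
      · rw [← h1, List.getLast?_append_cons, List.getLast?_append_cons]
      · have e1 : (pre.takeWhile (fun y => y ≠ a)).length
            + (pre.dropWhile (fun y => y ≠ a)).length = pre.length := by
          rw [← List.length_append, htd]
        have e2 : 0 < (pre.dropWhile (fun y => y ≠ a)).length :=
          List.length_pos_iff.2 hdW
        have e3 := congrArg List.length h1
        rw [List.length_append, List.length_cons] at e3
        rw [List.length_cons]
        omega
    · rw [if_neg ha] at h
      obtain ⟨i1, i2, i3⟩ := ih h
      refine ⟨?_, ?_, ?_⟩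
      · rwa [List.append_assoc, List.singleton_append] at i1
      · rwa [List.append_assoc, List.singleton_append] at i2
      · have i3' : p.length < pre.length + 1 + rest.length := by
          simpa [List.length_append] using i3
        have hc : (a :: rest).length = rest.length + 1 := List.length_cons
        omega

lemma le1Aux_append_some {pre l₁ p c : List (Pt dd)} (l₂ : List (Pt dd)) (h : le1Aux pre l₁ = (p, some c)) :
    le1Aux pre (l₁ ++ l₂) = (p ++ l₂, some c) := by
  induction l₁ generalizing pre with
  | nil => simp [le1Aux] at h
  | cons a rest ih =>
    rw [List.cons_append, le1Aux]
    rw [le1Aux] at h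
    by_cases ha : a ∈ pre
    · rw [if_pos ha] at h ⊢
      simp only [Prod.mk.injEq, Option.some.injEq] at h ⊢
      refine ⟨?_, h.2⟩
      rw [← h.1]
      simp
    · rw [if_neg ha] at h ⊢
      exact ih h

lemma le1Aux_append_none {pre l₁ p : List (Pt dd)} (l₂ : List (Pt dd)) (h : le1Aux pre l₁ = (p, none)) :
    le1Aux pre (l₁ ++ l₂) = le1Aux (pre ++ l₁) l₂ := by
  induction l₁ generalizing pre with
  | nil => simp
  | cons a rest ih =>
    rw [List.cons_append, le1Aux]
    rw [le1Aux] at h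
    by_cases ha : a ∈ pre
    · rw [if_pos ha] at h; simp at h
    · rw [if_neg ha] at h
      rw [if_neg ha, ih h, List.append_assoc, List.singleton_append]

lemma leAux_of_none {l p : List (Pt dd)} (h : le1Aux [] l = (p, none)) (n : ℕ) :
    leAux n l = (l, 0) := by
  cases n with
  | zero => rfl
  | succ n => rw [leAux, h]

lemma leAux_of_some {l p c : List (Pt dd)} (h : le1Aux [] l = (p, some c)) (n : ℕ) :
    leAux (n + 1) l = ((leAux n p).1, c ::ₘ (leAux n p).2) := by
  rw [leAux, h]

lemma leAux_eq_of_le : ∀ (n : ℕ) {m : ℕ} {l : List (Pt dd)}, l.length ≤ n → l.length ≤ m →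
    leAux n l = leAux m l := by
  intro n
  induction n with
  | zero =>
    intro m l hn _
    have : l = [] := List.length_eq_zero_iff.1 (Nat.le_zero.1 hn)
    subst this
    have h0 : le1Aux ([] : List (Pt dd)) [] = ([], none) := rfl
    rw [leAux_of_none h0, leAux_of_none h0]
  | succ n ih =>
    intro m l hn hm
    cases h : le1Aux ([] : List (Pt dd)) l with
    | mk p o =>
      cases o with
      | none => rw [leAux_of_none h, leAux_of_none h]
      | some c =>
        have hlen : p.length < l.length := by
          have := (le1Aux_some_spec h).2.2
          simpa using this
        have hl1 : l ≠ [] := by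
          rintro rfl
          simp [le1Aux] at h
        have hlpos : 0 < l.length := List.length_pos_iff.2 hl1
        obtain ⟨m', rfl⟩ : ∃ m', m = m' + 1 := ⟨m - 1, by omega⟩
        rw [leAux_of_some h, leAux_of_some h, ih (m := m') (l := p) (by omega) (by omega)]

end LoopErasureLemmas


lemma erasedLoops_of_none {dd : ℕ} {l p : List (Pt dd)} (h : le1Aux [] l = (p, none)) : erasedLoops l = 0 := by
  unfold erasedLoops
  rw [leAux_of_none h]

lemma erasedLoops_of_some {dd : ℕ} {l p c : List (Pt dd)} (h : le1Aux [] l = (p, some c)) :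
    erasedLoops l = c ::ₘ erasedLoops p := by
  have hlen : p.length < l.length := by simpa using (le1Aux_some_spec h).2.2
  obtain ⟨k, hk⟩ : ∃ k, l.length = k + 1 := ⟨l.length - 1, by omega⟩
  unfold erasedLoops
  rw [hk, leAux_of_some h, leAux_eq_of_le k (by omega) le_rfl]

lemma erasedLoops_append_closed {dd : ℕ} (x : Pt dd) :
    ∀ (n : ℕ) (l : List (Pt dd)), l.length ≤ n → l.head? = some x → l.getLast? = some x →
      ∀ t : List (Pt dd), erasedLoops (l ++ t) = erasedLoops l + erasedLoops (x :: t) := by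
  intro n
  induction n with
  | zero =>
    intro l hlen hh _ _
    rw [List.length_eq_zero_iff.1 (Nat.le_zero.1 hlen)] at hh
    simp at hh
  | succ n ih =>
    intro l hlen hh hl t
    cases h : le1Aux ([] : List (Pt dd)) l with
    | mk p o =>
      cases o with
      | none =>
        have hp : p = l := by simpa using le1Aux_none_eq h
        have hnd : l.Nodup := by simpa using le1Aux_none_nodup List.nodup_nil h
        obtain ⟨a, l', rfl⟩ : ∃ a l', l = a :: l' := by
          cases l with
          | nil => simp at hh
          | cons a l' => exact ⟨a, l', rfl⟩
        have hax : a = x := by simpa using hh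
        have hl' : l' = [] := by
          by_contra hne
          have h1 : (a :: l').getLast (by simp) = l'.getLast hne := List.getLast_cons hne
          have h2 : (a :: l').getLast? = some ((a :: l').getLast (by simp)) :=
            List.getLast?_eq_getLast _
          rw [hl] at h2
          have hx_mem : x ∈ l' := by
            have : l'.getLast hne = x := by
              rw [← h1]
              exact (Option.some_injective _ h2.symm)
            rw [← this]
            exact List.getLast_mem hne
          have := (List.nodup_cons.1 hnd).1
          rw [hax] at this
          exact this hx_mem
        subst hl'; subst hax
        rw [erasedLoops_of_none h]
        simp
      | some c =>
        obtain ⟨s1, s2, s3⟩ := le1Aux_some_spec h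
        have hp_head : p.head? = some x := by rw [s1]; simpa using hh
        have hp_last : p.getLast? = some x := by rw [s2]; simpa using hl
        have hp_len : p.length < l.length := by simpa using s3
        have e1 : erasedLoops (l ++ t) = c ::ₘ erasedLoops (p ++ t) :=
          erasedLoops_of_some (by simpa using le1Aux_append_some t h)
        rw [e1, ih p (by omega) hp_head hp_last t, erasedLoops_of_some h, Multiset.cons_add]

namespace Walk

variable {d : ℕ}

lemma ext' {ω₁ ω₂ : Walk d} (h : ω₁.pts = ω₂.pts) : ω₁ = ω₂ := by
  cases ω₁; cases ω₂; simpa using h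

lemma length_pos (ω : Walk d) : 0 < ω.pts.length := List.length_pos_iff.2 ω.ne

lemma length_pts_s14 (ω : Walk d) : ω.pts.length = ω.len + 1 := by
  have := ω.length_pos
  simp only [len]
  omega

lemma head?_pts (ω : Walk d) : ω.pts.head? = some ω.start := by
  cases h : ω.pts with
  | nil => exact absurd h ω.ne
  | cons a l => simp [start, h]

lemma finish_eq (ω : Walk d) : ω.finish = ω.pts.getLast ω.ne := by
  simp [finish, List.getLastD_eq_getLast?, List.getLast?_eq_getLast ω.ne]

lemma getLast?_pts (ω : Walk d) : ω.pts.getLast? = some ω.finish := by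
  rw [finish_eq]
  exact List.getLast?_eq_getLast ω.ne

lemma nth_eq (ω : Walk d) (i : ℕ) : ω.nth i = (ω.pts[i]?).getD default := by
  simp [nth, List.getD_eq_getElem?_getD]

lemma nth_zero (ω : Walk d) : ω.nth 0 = ω.start := by
  cases h : ω.pts with
  | nil => exact absurd h ω.ne
  | cons a l => simp [nth, start, h]

lemma getElem?_len (ω : Walk d) : ω.pts[ω.len]? = some ω.finish := by
  rw [← ω.getLast?_pts, List.getLast?_eq_getElem?, ω.length_pts_s14]
  simp

lemma nth_len (ω : Walk d) : ω.nth ω.len = ω.finish := by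
  rw [nth_eq, getElem?_len]
  rfl

lemma pts_eq_start_cons (ω : Walk d) : ω.pts = ω.start :: ω.pts.tail := by
  cases h : ω.pts with
  | nil => exact absurd h ω.ne
  | cons a l => simp [start, h]

/-- The walk consisting of the first `j` steps of `ω`. -/
def takeW (ω : Walk d) (j : ℕ) : Walk d :=
  ⟨ω.pts.take (j + 1), by simp [List.take_eq_nil_iff, ω.ne], ω.chain.take _⟩

/-- The walk obtained from `ω` by removing its first `j` steps. -/
def dropW (ω : Walk d) (j : ℕ) : Walk d :=
  ⟨ω.pts.drop (min j ω.len), by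
      have h1 := ω.length_pts_s14
      have h2 : min j ω.len ≤ ω.len := min_le_right _ _
      simp only [ne_eq, List.drop_eq_nil_iff]
      omega,
    ω.chain.drop _⟩

lemma takeW_pts (ω : Walk d) (j : ℕ) : (ω.takeW j).pts = ω.pts.take (j + 1) := rfl

lemma dropW_pts (ω : Walk d) {j : ℕ} (h : j ≤ ω.len) : (ω.dropW j).pts = ω.pts.drop j := by
  simp [dropW, min_eq_left h]

lemma takeW_length (ω : Walk d) {j : ℕ} (h : j ≤ ω.len) :
    (ω.takeW j).pts.length = j + 1 := by
  rw [takeW_pts, List.length_take, ω.length_pts_s14]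
  omega

lemma takeW_len (ω : Walk d) {j : ℕ} (h : j ≤ ω.len) : (ω.takeW j).len = j := by
  have h1 := (ω.takeW j).length_pts_s14
  rw [takeW_length ω h] at h1
  omega

lemma dropW_len (ω : Walk d) {j : ℕ} (h : j ≤ ω.len) : (ω.dropW j).len = ω.len - j := by
  have h1 := (ω.dropW j).length_pts_s14
  rw [dropW_pts ω h, List.length_drop, ω.length_pts_s14] at h1
  omega

lemma takeW_start (ω : Walk d) (j : ℕ) : (ω.takeW j).start = ω.start := by
  have h1 := (ω.takeW j).head?_pts
  rw [takeW_pts] at h1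
  cases h : ω.pts with
  | nil => exact absurd h ω.ne
  | cons a l =>
    rw [h] at h1
    simp only [List.take_succ_cons, List.head?_cons, Option.some.injEq] at h1
    rw [← h1]
    simp [start, h]

lemma takeW_finish (ω : Walk d) {j : ℕ} (h : j ≤ ω.len) : (ω.takeW j).finish = ω.nth j := by
  have h1 := (ω.takeW j).getLast?_pts
  rw [List.getLast?_eq_getElem?, takeW_length ω h] at h1
  simp only [Nat.add_sub_cancel] at h1
  rw [takeW_pts, List.getElem?_take_of_lt (by omega : j < j + 1)] at h1
  rw [nth_eq, h1]
  rfl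

lemma dropW_start (ω : Walk d) {j : ℕ} (h : j ≤ ω.len) : (ω.dropW j).start = ω.nth j := by
  have h1 := (ω.dropW j).head?_pts
  rw [dropW_pts ω h, List.head?_eq_getElem?, List.getElem?_drop] at h1
  simp only [Nat.add_zero] at h1
  rw [nth_eq, h1]
  rfl

lemma dropW_finish (ω : Walk d) {j : ℕ} (h : j ≤ ω.len) : (ω.dropW j).finish = ω.finish := by
  have h1 := (ω.dropW j).getLast?_pts
  rw [List.getLast?_eq_getElem?, dropW_pts ω h, List.length_drop, List.getElem?_drop,
    ω.length_pts_s14] at h1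
  have e : j + (ω.len + 1 - j - 1) = ω.len := by omega
  rw [e, getElem?_len] at h1
  exact Option.some_injective _ h1.symm

/-- Concatenation of two composable walks (junk value otherwise). -/
def conc (ω₁ ω₂ : Walk d) : Walk d :=
  if h : ω₁.finish = ω₂.start then
    ⟨ω₁.pts ++ ω₂.pts.tail, by simp [ω₁.ne], by
      show List.IsChain Adj _
      rw [List.isChain_append]
      refine ⟨ω₁.chain, ω₂.chain.tail, ?_⟩
      intro a ha b hb
      rw [ω₁.getLast?_pts, Option.mem_def, Option.some.injEq] at ha
      have hch : List.IsChain Adj ω₂.pts := ω₂.chain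
      rw [ω₂.pts_eq_start_cons, List.isChain_cons] at hch
      rw [← ha, h] at *
      exact hch.1 b hb⟩
  else ω₁

lemma conc_pts {ω₁ ω₂ : Walk d} (h : ω₁.finish = ω₂.start) :
    (conc ω₁ ω₂).pts = ω₁.pts ++ ω₂.pts.tail := by
  rw [conc, dif_pos h]

lemma conc_len {ω₁ ω₂ : Walk d} (h : ω₁.finish = ω₂.start) :
    (conc ω₁ ω₂).len = ω₁.len + ω₂.len := by
  have h1 := (conc ω₁ ω₂).length_pts_s14
  rw [conc_pts h, List.length_append, List.length_tail, ω₁.length_pts_s14, ω₂.length_pts_s14] at h1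
  omega

lemma conc_start {ω₁ ω₂ : Walk d} (h : ω₁.finish = ω₂.start) :
    (conc ω₁ ω₂).start = ω₁.start := by
  have h1 := (conc ω₁ ω₂).head?_pts
  rw [conc_pts h, List.head?_append, ω₁.head?_pts, Option.some_or] at h1
  exact (Option.some_injective _ h1).symm

lemma conc_finish {ω₁ ω₂ : Walk d} (h : ω₁.finish = ω₂.start) :
    (conc ω₁ ω₂).finish = ω₂.finish := by
  have h1 := (conc ω₁ ω₂).getLast?_pts
  rw [conc_pts h] at h1
  cases ht : ω₂.pts.tail with
  | nil =>
    have h2 : ω₂.pts = [ω₂.start] := by rw [ω₂.pts_eq_start_cons, ht]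
    have h3 : ω₂.finish = ω₂.start := by
      have h4 := ω₂.getLast?_pts
      rw [h2] at h4
      simpa using h4.symm
    rw [ht, List.append_nil, ω₁.getLast?_pts] at h1
    rw [h3, ← h]
    exact (Option.some_injective _ h1).symm
  | cons b tl =>
    have h2 := ω₂.getLast?_pts
    rw [ω₂.pts_eq_start_cons, ht, List.getLast?_cons_cons] at h2
    rw [ht, List.getLast?_append, h2, Option.some_or] at h1
    exact (Option.some_injective _ h1).symm

end Walk

lemma erasedLoops_inst {α : Type*} (i1 i2 : DecidableEq α) (l : List α) :
    @erasedLoops α i1 l = @erasedLoops α i2 l := by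
  obtain rfl : i1 = i2 := by
    funext a b
    exact Subsingleton.elim _ _
  rfl

lemma wt0_eq {d : ℕ} (lam : List (Pt d) → ℝ≥0) (ω : Walk d) :
    wt0 lam ω = ((erasedLoops ω.pts).map (fun η => (lam η : ℝ≥0∞))).prod := by
  unfold wt0
  exact congrArg (fun m => (Multiset.map (fun η => (lam η : ℝ≥0∞)) m).prod)
    (erasedLoops_inst _ _ _)

lemma wt_conc {d : ℕ} (lam : List (Pt d) → ℝ≥0) (z : ℝ≥0) {ω₁ ω₂ : Walk d} {x : Pt d}
    (h1 : ω₁.start = x) (h2 : ω₁.finish = x) (h3 : ω₂.start = x) :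
    wt lam z (Walk.conc ω₁ ω₂) = wt lam z ω₁ * wt lam z ω₂ := by
  have h : ω₁.finish = ω₂.start := by rw [h2, h3]
  have hpts2 : ω₂.pts = x :: ω₂.pts.tail := by
    rw [← h3]; exact ω₂.pts_eq_start_cons
  have hE0 : erasedLoops (ω₁.pts ++ ω₂.pts.tail)
      = erasedLoops ω₁.pts + erasedLoops (x :: ω₂.pts.tail) :=
    erasedLoops_append_closed x ω₁.pts.length ω₁.pts le_rfl
      (by rw [ω₁.head?_pts, h1]) (by rw [ω₁.getLast?_pts, h2]) ω₂.pts.tail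
  rw [← hpts2] at hE0
  have hE : erasedLoops (Walk.conc ω₁ ω₂).pts = erasedLoops ω₁.pts + erasedLoops ω₂.pts := by
    rw [Walk.conc_pts h]
    exact hE0
  unfold wt
  rw [wt0_eq, wt0_eq, wt0_eq, hE, Walk.conc_len h, Multiset.map_add, Multiset.prod_add, pow_add]
  ring

lemma conc_takeW_dropW {d : ℕ} (ω : Walk d) {j : ℕ} (h : j ≤ ω.len) :
    Walk.conc (ω.takeW j) (ω.dropW j) = ω := by
  have hfs : (ω.takeW j).finish = (ω.dropW j).start := by
    rw [ω.takeW_finish h, ω.dropW_start h]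
  apply Walk.ext'
  rw [Walk.conc_pts hfs, Walk.takeW_pts, Walk.dropW_pts ω h, List.tail_drop,
    List.take_append_drop]

lemma takeW_conc {d : ℕ} {ω₁ ω₂ : Walk d} (h : ω₁.finish = ω₂.start) :
    (Walk.conc ω₁ ω₂).takeW ω₁.len = ω₁ := by
  apply Walk.ext'
  rw [Walk.takeW_pts, Walk.conc_pts h, List.take_append_of_le_length (by rw [ω₁.length_pts_s14]),
    ω₁.length_pts_s14.symm, List.take_length]

lemma dropW_conc {d : ℕ} {ω₁ ω₂ : Walk d} (h : ω₁.finish = ω₂.start) :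
    (Walk.conc ω₁ ω₂).dropW ω₁.len = ω₂ := by
  apply Walk.ext'
  have hle : ω₁.len ≤ (Walk.conc ω₁ ω₂).len := by rw [Walk.conc_len h]; omega
  rw [Walk.dropW_pts _ hle, Walk.conc_pts h,
    List.drop_append_of_le_length (by rw [ω₁.length_pts_s14]; omega)]
  have hlen1 : (ω₁.pts.drop ω₁.len).length = 1 := by
    rw [List.length_drop, ω₁.length_pts_s14]; omega
  obtain ⟨a, ha⟩ := List.length_eq_one_iff.1 hlen1
  have hax : a = ω₁.finish := by
    have := List.getElem?_drop (xs := ω₁.pts) (i := ω₁.len) (j := 0)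
    rw [ha, Nat.add_zero, ω₁.getElem?_len] at this
    simpa using this
  rw [ha, hax, h, List.singleton_append, ← ω₂.pts_eq_start_cons]


/-- **Returns identity for closed λ-LWW.**  Let `λ` be nonnegative loop activities,
`z ≥ 0` and `x ∈ ℤ^d`, and assume `α₀(λ,z) < ∞`.  Then the total weight of closed
walks at `x`, each counted with multiplicity the number of returns
`#{j ∈ {1,…,|ω|} : ω_j = x}`, equals `α₀(λ,z)·(α₀(λ,z) − 1)`. -/
theorem returns_identity {d : ℕ} (lam : List (Pt d) → ℝ≥0) (z : ℝ≥0) (x : Pt d)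
    (hfin : alpha0At lam z x < ⊤) :
    (∑' ω : Walk d,
        if ω.start = x ∧ ω.finish = x ∧ 1 ≤ ω.len
        then (((Finset.Icc 1 ω.len).filter (fun j => ω.nth j = x)).card : ℝ≥0∞)
              * wt lam z ω
        else 0)
      = alpha0At lam z x * (alpha0At lam z x - 1) := by
  classical
  set A := alpha0At lam z x with hA
  set F : Walk d → ℝ≥0∞ := fun ω => if ω.start = x ∧ ω.finish = x then wt lam z ω else 0
    with hF
  have hAF : ∑' ω : Walk d, F ω = A := by rw [hA]; rfl
  set g : Walk d × ℕ → ℝ≥0∞ := fun q =>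
    if q.1.start = x ∧ q.1.finish = x ∧ q.2 ≤ q.1.len ∧ q.1.nth q.2 = x
    then wt lam z q.1 else 0 with hg
  have hgval : ∀ (ω : Walk d) (j : ℕ), g (ω, j)
      = if ω.start = x ∧ ω.finish = x ∧ j ≤ ω.len ∧ ω.nth j = x then wt lam z ω else 0 :=
    fun _ _ => rfl
  have hsupp : ∀ q : Walk d × ℕ, g q ≠ 0 →
      q.1.start = x ∧ q.1.finish = x ∧ q.2 ≤ q.1.len ∧ q.1.nth q.2 = x := by
    intro q hq
    by_contra hc
    exact hq (if_neg hc)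
  -- Step 1 : A * A equals the sum over walks with a marked return time.
  have step1 : A * A = ∑' q : Walk d × ℕ, g q := by
    have e1 : A * A = ∑' p : Walk d × Walk d, F p.1 * F p.2 := by
      have h0 : (∑' p : Walk d × Walk d, F p.1 * F p.2)
          = ∑' a : Walk d, ∑' b : Walk d, F a * F b :=
        ENNReal.tsum_prod (f := fun a b => F a * F b)
      rw [h0]
      simp only [ENNReal.tsum_mul_left, hAF]
      rw [ENNReal.tsum_mul_right, hAF]
    rw [e1]
    apply tsum_eq_tsum_of_ne_zero_bij
      (i := fun q => ((q : Walk d × ℕ).1.takeW (q : Walk d × ℕ).2,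
        (q : Walk d × ℕ).1.dropW (q : Walk d × ℕ).2))
    · -- injectivity
      rintro ⟨⟨ω, j⟩, hq⟩ ⟨⟨ω', j'⟩, hq'⟩ hij
      obtain ⟨-, -, hj, -⟩ := hsupp _ (Function.mem_support.1 hq)
      obtain ⟨-, -, hj', -⟩ := hsupp _ (Function.mem_support.1 hq')
      simp only [Prod.mk.injEq] at hij
      obtain ⟨ht, hd⟩ := hij
      have hjj : j = j' := by
        have e1 := ω.takeW_length hj
        have e2 := ω'.takeW_length hj'
        rw [ht, e2] at e1
        omega
      subst hjj
      have hωω : ω = ω' := by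
        have h1 := conc_takeW_dropW ω hj
        have h2 := conc_takeW_dropW ω' hj'
        rw [ht, hd, h2] at h1
        exact h1.symm
      subst hωω
      rfl
    · -- the image covers the support
      rintro ⟨ω₁, ω₂⟩ hp
      rw [Function.mem_support] at hp
      have h1 : F ω₁ ≠ 0 := by
        intro h0; rw [h0, zero_mul] at hp; exact hp rfl
      have h2 : F ω₂ ≠ 0 := by
        intro h0; rw [h0, mul_zero] at hp; exact hp rfl
      have hc1 : ω₁.start = x ∧ ω₁.finish = x := by
        by_contra hc; exact h1 (if_neg hc)
      have hc2 : ω₂.start = x ∧ ω₂.finish = x := by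
        by_contra hc; exact h2 (if_neg hc)
      have hfs : ω₁.finish = ω₂.start := by rw [hc1.2, hc2.1]
      have hwt : wt lam z (Walk.conc ω₁ ω₂) = wt lam z ω₁ * wt lam z ω₂ :=
        wt_conc lam z hc1.1 hc1.2 hc2.1
      have hlen : ω₁.len ≤ (Walk.conc ω₁ ω₂).len := by rw [Walk.conc_len hfs]; omega
      have hnth : (Walk.conc ω₁ ω₂).nth ω₁.len = x := by
        have ht := takeW_conc hfs
        have h3 := (Walk.conc ω₁ ω₂).takeW_finish hlen
        rw [ht] at h3
        rw [← h3, hc1.2]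
      have hgq : g (Walk.conc ω₁ ω₂, ω₁.len) ≠ 0 := by
        rw [hgval, if_pos ⟨by rw [Walk.conc_start hfs, hc1.1],
          by rw [Walk.conc_finish hfs, hc2.2], hlen, hnth⟩, hwt]
        have hF1 : F ω₁ = wt lam z ω₁ := if_pos hc1
        have hF2 : F ω₂ = wt lam z ω₂ := if_pos hc2
        rw [← hF1, ← hF2]
        exact hp
      refine ⟨⟨(Walk.conc ω₁ ω₂, ω₁.len), Function.mem_support.2 hgq⟩, ?_⟩
      simp only
      rw [takeW_conc hfs, dropW_conc hfs]
    · -- the weights agree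
      rintro ⟨⟨ω, j⟩, hq⟩
      obtain ⟨hs, hf2, hj, hnth⟩ := hsupp _ (Function.mem_support.1 hq)
      simp only
      have hF1 : F (ω.takeW j) = wt lam z (ω.takeW j) :=
        if_pos ⟨by rw [ω.takeW_start, hs], by rw [ω.takeW_finish hj, hnth]⟩
      have hF2 : F (ω.dropW j) = wt lam z (ω.dropW j) :=
        if_pos ⟨by rw [ω.dropW_start hj, hnth], by rw [ω.dropW_finish hj, hf2]⟩
      have hwt : wt lam z (Walk.conc (ω.takeW j) (ω.dropW j))
          = wt lam z (ω.takeW j) * wt lam z (ω.dropW j) :=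
        wt_conc lam z (by rw [ω.takeW_start, hs]) (by rw [ω.takeW_finish hj, hnth])
          (by rw [ω.dropW_start hj, hnth])
      rw [hF1, hF2, ← hwt, conc_takeW_dropW ω hj, hgval, if_pos ⟨hs, hf2, hj, hnth⟩]
  -- Step 2 : resum over the marked return time.
  have hcard : ∀ ω : Walk d, ω.start = x → ω.finish = x →
      ((Finset.Icc 0 ω.len).filter (fun j => ω.nth j = x)).card
        = ((Finset.Icc 1 ω.len).filter (fun j => ω.nth j = x)).card + 1 := by
    intro ω hs hf2
    have hins : Finset.Icc 0 ω.len = insert 0 (Finset.Icc 1 ω.len) := by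
      ext k
      simp only [Finset.mem_Icc, Finset.mem_insert]
      omega
    rw [hins, Finset.filter_insert, if_pos (by rw [ω.nth_zero, hs]),
      Finset.card_insert_of_notMem (by simp [Finset.mem_filter])]
  have step2 : (∑' q : Walk d × ℕ, g q)
      = ∑' ω : Walk d, (if ω.start = x ∧ ω.finish = x
          then ((((Finset.Icc 1 ω.len).filter (fun j => ω.nth j = x)).card : ℝ≥0∞) + 1)
            * wt lam z ω
          else 0) := by
    have h0 : (∑' q : Walk d × ℕ, g q) = ∑' ω : Walk d, ∑' j : ℕ, g (ω, j) :=
      ENNReal.tsum_prod (f := fun ω j => g (ω, j))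
    rw [h0]
    apply tsum_congr
    intro ω
    by_cases hω : ω.start = x ∧ ω.finish = x
    · rw [if_pos hω]
      have hpt : ∀ j : ℕ, g (ω, j)
          = if j ∈ (Finset.Icc 0 ω.len).filter (fun j => ω.nth j = x)
            then wt lam z ω else 0 := by
        intro j
        rw [hgval]
        apply if_congr _ rfl rfl
        simp [Finset.mem_filter, Finset.mem_Icc, hω.1, hω.2]
      rw [tsum_congr hpt,
        tsum_eq_sum (s := (Finset.Icc 0 ω.len).filter (fun j => ω.nth j = x))
          (fun b hb => if_neg hb),
        Finset.sum_congr rfl (fun j hj => if_pos hj), Finset.sum_const, nsmul_eq_mul,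
        hcard ω hω.1 hω.2]
      push_cast
      ring
    · rw [if_neg hω]
      have hz : ∀ j : ℕ, g (ω, j) = 0 := by
        intro j
        rw [hgval]
        apply if_neg
        intro hc
        exact hω ⟨hc.1, hc.2.1⟩
      rw [tsum_congr hz]
      exact tsum_zero
  -- Step 3 : split off the contribution of the marked time 0.
  have step3 : (∑' ω : Walk d, (if ω.start = x ∧ ω.finish = x
          then ((((Finset.Icc 1 ω.len).filter (fun j => ω.nth j = x)).card : ℝ≥0∞) + 1)
            * wt lam z ω
          else 0))
      = (∑' ω : Walk d,
          if ω.start = x ∧ ω.finish = x ∧ 1 ≤ ω.len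
          then (((Finset.Icc 1 ω.len).filter (fun j => ω.nth j = x)).card : ℝ≥0∞)
                * wt lam z ω
          else 0) + A := by
    rw [← hAF, ← ENNReal.tsum_add]
    apply tsum_congr
    intro ω
    by_cases hω : ω.start = x ∧ ω.finish = x
    · rw [if_pos hω, add_mul, one_mul]
      have hFω : F ω = wt lam z ω := if_pos hω
      rw [hFω]
      congr 1
      by_cases hl : 1 ≤ ω.len
      · rw [if_pos ⟨hω.1, hω.2, hl⟩]
      · rw [if_neg (by tauto)]
        have hlen0 : ω.len = 0 := by omega
        rw [hlen0]
        simp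
    · have hFω : F ω = 0 := if_neg hω
      rw [if_neg hω, if_neg (by tauto), hFω, add_zero]
  -- `A ≥ 1` thanks to the zero-step walk.
  have hA1 : (1 : ℝ≥0∞) ≤ A := by
    have hne : ([x] : List (Pt d)) ≠ [] := by simp
    set ω₀ : Walk d := ⟨[x], hne, List.isChain_singleton x⟩ with hω₀
    have hc : ω₀.start = x ∧ ω₀.finish = x := by
      constructor <;> simp [Walk.start, Walk.finish, hω₀]
    have hle : le1Aux ([] : List (Pt d)) [x] = ([x], none) := by
      rw [le1Aux]
      simp only [List.not_mem_nil, if_false]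
      rw [le1Aux]
      simp
    have hF0 : F ω₀ = 1 := by
      rw [hF]
      simp only
      rw [if_pos hc]
      unfold wt
      rw [wt0_eq]
      have hlen : ω₀.len = 0 := by simp [Walk.len, hω₀]
      have hel : erasedLoops (ω₀.pts) = 0 := erasedLoops_of_none hle
      rw [hlen, hel]
      simp
    calc (1 : ℝ≥0∞) = F ω₀ := hF0.symm
      _ ≤ ∑' ω : Walk d, F ω := ENNReal.le_tsum ω₀
      _ = A := hAF
  -- Conclusion.
  have key : (∑' ω : Walk d,
      if ω.start = x ∧ ω.finish = x ∧ 1 ≤ ω.len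
      then (((Finset.Icc 1 ω.len).filter (fun j => ω.nth j = x)).card : ℝ≥0∞)
            * wt lam z ω
      else 0) + A = A * A := by
    rw [← step3, ← step2, ← step1]
  have h2 : A * (A - 1) + A = A * A := by
    calc A * (A - 1) + A = A * ((A - 1) + 1) := by rw [mul_add, mul_one]
      _ = A * A := by rw [tsub_add_cancel_of_le hA1]
  have := key.trans h2.symm
  exact (ENNReal.add_left_inj hfin.ne).1 this

end LWW
end
end
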